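/- arXiv:2310.12913 — 8 statements merged into one kernel-verified Lean document; each statement's English description precedes it below -/
import Mathlib

section
/- Let U ≥ 1 be a natural number, let T be a finite set of integer triples (a, b, c) such that a + b ≠ c and |a|, |b|, |c| ≤ U for every triple in T, let m ≥ 2 be a real number, and let P be a nonempty finite set of prime numbers each of size at least m. Then there exists a prime p ∈ P such that the number of triples (a, b, c) ∈ T with a + b ≡ c (mod p) is at most |T| · log(3U) / (|P| · log m). -/
lemma key_count (U : ℕ) (hU : 1 ≤ U) (m : ℝ) (hm : 2 ≤ m)
    (P : Finset ℕ) (hP : ∀ p ∈ P, Nat.Prime p ∧ m ≤ (p : ℝ))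
    (n : ℤ) (hn : n ≠ 0) (hle : n.natAbs ≤ 3 * U) :
    ((P.filter (fun p : ℕ => (p : ℤ) ∣ n)).card : ℝ) ≤ Real.log (3 * U) / Real.log m := by
  set S := P.filter (fun p : ℕ => (p : ℤ) ∣ n) with hS
  have hmem : ∀ p ∈ S, Nat.Prime p ∧ m ≤ (p : ℝ) ∧ p ∣ n.natAbs := by
    intro p hp
    rw [hS, Finset.mem_filter] at hp
    refine ⟨(hP p hp.1).1, (hP p hp.1).2, ?_⟩
    simpa using Int.natAbs_dvd_natAbs.mpr hp.2
  have hprod : (∏ p ∈ S, p) ∣ n.natAbs :=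
    Finset.prod_primes_dvd _ (fun p hp => (hmem p hp).1.prime) (fun p hp => (hmem p hp).2.2)
  have hpos : 0 < n.natAbs := Int.natAbs_pos.mpr hn
  have hprodle : (∏ p ∈ S, p) ≤ 3 * U := le_trans (Nat.le_of_dvd hpos hprod) hle
  have hmk : m ^ S.card ≤ (3 * U : ℝ) := by
    calc m ^ S.card = ∏ _p ∈ S, m := by rw [Finset.prod_const]
    _ ≤ ∏ p ∈ S, (p : ℝ) := by
        apply Finset.prod_le_prod (fun p _ => by linarith) (fun p hp => (hmem p hp).2.1)
    _ = ((∏ p ∈ S, p : ℕ) : ℝ) := by push_cast; ring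
    _ ≤ (3 * U : ℝ) := by exact_mod_cast hprodle
  have hmpos : (0:ℝ) < m := by linarith
  have hlogm : 0 < Real.log m := Real.log_pos (by linarith)
  have h3U : (0:ℝ) < 3 * U := by positivity
  have := Real.log_le_log (by positivity) hmk
  rw [Real.log_pow] at this
  rw [le_div_iff₀ hlogm]
  exact this

/-- Let `U ≥ 1`, let `T` be a finite set of integer triples `(a, b, c)` with `a + b ≠ c` and
`|a|, |b|, |c| ≤ U`, let `m ≥ 2` be real and `P` a nonempty finite set of primes each at
least `m`. Then some `p ∈ P` has at most `|T| · log (3U) / (|P| · log m)` pseudo-solutions,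
i.e. triples with `a + b ≡ c (mod p)` (meaning `p ∣ a + b - c`). -/
theorem stmt_2 (U : ℕ) (hU : 1 ≤ U)
    (T : Finset (ℤ × ℤ × ℤ))
    (hT : ∀ t ∈ T, t.1 + t.2.1 ≠ t.2.2 ∧ |t.1| ≤ (U : ℤ) ∧ |t.2.1| ≤ (U : ℤ) ∧ |t.2.2| ≤ (U : ℤ))
    (m : ℝ) (hm : 2 ≤ m)
    (P : Finset ℕ) (hPne : P.Nonempty) (hP : ∀ p ∈ P, Nat.Prime p ∧ m ≤ (p : ℝ)) :
    ∃ p ∈ P,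
      ((T.filter (fun t : ℤ × ℤ × ℤ => (p : ℤ) ∣ (t.1 + t.2.1 - t.2.2))).card : ℝ) ≤
        (T.card : ℝ) * Real.log (3 * U) / ((P.card : ℝ) * Real.log m) := by
  obtain ⟨p₀, hp₀P, hp₀min⟩ := P.exists_min_image
    (fun p => (T.filter (fun t : ℤ × ℤ × ℤ => (p : ℤ) ∣ (t.1 + t.2.1 - t.2.2))).card) hPne
  refine ⟨p₀, hp₀P, ?_⟩
  have hswap : ∑ p ∈ P, (T.filter (fun t : ℤ × ℤ × ℤ => (p : ℤ) ∣ (t.1 + t.2.1 - t.2.2))).card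
      = ∑ t ∈ T, (P.filter (fun p : ℕ => (p : ℤ) ∣ (t.1 + t.2.1 - t.2.2))).card := by
    simp only [Finset.card_filter]
    exact Finset.sum_comm
  have hper : ∀ t ∈ T,
      ((P.filter (fun p : ℕ => (p : ℤ) ∣ (t.1 + t.2.1 - t.2.2))).card : ℝ)
        ≤ Real.log (3 * U) / Real.log m := by
    intro t ht
    obtain ⟨hne, ha, hb, hc⟩ := hT t ht
    apply key_count U hU m hm P hP _ (by omega : t.1 + t.2.1 - t.2.2 ≠ 0)
    have : |t.1 + t.2.1 - t.2.2| ≤ 3 * U := by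
      calc |t.1 + t.2.1 - t.2.2| ≤ |t.1| + |t.2.1| + |t.2.2| := by
            apply (abs_sub _ _).trans
            apply add_le_add_left (abs_add_le _ _)
      _ ≤ 3 * U := by omega
    rw [Int.abs_eq_natAbs] at this
    exact_mod_cast this
  have hsum : (∑ p ∈ P, ((T.filter (fun t : ℤ × ℤ × ℤ => (p : ℤ) ∣ (t.1 + t.2.1 - t.2.2))).card : ℝ))
      ≤ (T.card : ℝ) * (Real.log (3 * U) / Real.log m) := by
    calc (∑ p ∈ P, ((T.filter (fun t : ℤ × ℤ × ℤ => (p : ℤ) ∣ (t.1 + t.2.1 - t.2.2))).card : ℝ))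
        = ∑ t ∈ T, ((P.filter (fun p : ℕ => (p : ℤ) ∣ (t.1 + t.2.1 - t.2.2))).card : ℝ) := by
          exact_mod_cast congrArg (Nat.cast : ℕ → ℝ) hswap
      _ ≤ ∑ _t ∈ T, Real.log (3 * U) / Real.log m := Finset.sum_le_sum hper
      _ = (T.card : ℝ) * (Real.log (3 * U) / Real.log m) := by
          rw [Finset.sum_const, nsmul_eq_mul]
  have hmin : (P.card : ℝ) * ((T.filter (fun t : ℤ × ℤ × ℤ => (p₀ : ℤ) ∣ (t.1 + t.2.1 - t.2.2))).card : ℝ)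
      ≤ ∑ p ∈ P, ((T.filter (fun t : ℤ × ℤ × ℤ => (p : ℤ) ∣ (t.1 + t.2.1 - t.2.2))).card : ℝ) := by
    calc (P.card : ℝ) * _ = ∑ _p ∈ P, ((T.filter (fun t : ℤ × ℤ × ℤ => (p₀ : ℤ) ∣ (t.1 + t.2.1 - t.2.2))).card : ℝ) := by
          rw [Finset.sum_const, nsmul_eq_mul]
      _ ≤ _ := Finset.sum_le_sum (fun p hp => by exact_mod_cast hp₀min p hp)
  have hPpos : (0:ℝ) < P.card := by exact_mod_cast hPne.card_pos
  have hlogm : 0 < Real.log m := Real.log_pos (by linarith)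
  rw [le_div_iff₀ (by positivity)]
  calc ((T.filter (fun t : ℤ × ℤ × ℤ => (p₀ : ℤ) ∣ (t.1 + t.2.1 - t.2.2))).card : ℝ) * ((P.card : ℝ) * Real.log m)
      = ((P.card : ℝ) * _) * Real.log m := by ring
    _ ≤ ((T.card : ℝ) * (Real.log (3 * U) / Real.log m)) * Real.log m := by
        apply mul_le_mul_of_nonneg_right (hmin.trans hsum) hlogm.le
    _ = (T.card : ℝ) * Real.log (3 * U) := by field_simp
end

section
/- Let m ≥ 2 and V ≥ 1 be real numbers, let P be a finite set of prime numbers each of size at least m, let T be a finite set of nonzero integers each of absolute value at most V, and let R be a positive integer with R ≤ |P|. Then there exist R distinct primes p₁, …, p_R ∈ P such that the number of elements t ∈ T divisible by the product p₁⋯p_R is at most |T| · (log V / ((|P| − R + 1) · log m))^R. -/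
/-- A nonzero integer `t` with `|t| ≤ V` is divisible by at most `log V / log m`
primes from a set of primes each at least `m ≥ 2`. -/
lemma stmt3_count_primes_le (m V : ℝ) (hm : 2 ≤ m)
    (P' : Finset ℕ) (hP : ∀ p ∈ P', Nat.Prime p ∧ m ≤ (p : ℝ))
    (t : ℤ) (ht0 : t ≠ 0) (htV : |(t : ℝ)| ≤ V) :
    ((P'.filter (fun p : ℕ => (p : ℤ) ∣ t)).card : ℝ) ≤ Real.log V / Real.log m := by
  set D := P'.filter (fun p : ℕ => (p : ℤ) ∣ t) with hD
  have hm0 : (0 : ℝ) < m := lt_of_lt_of_le two_pos hm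
  have hlogm : 0 < Real.log m := Real.log_pos (lt_of_lt_of_le one_lt_two hm)
  have hdvd : (∏ p ∈ D, p) ∣ t.natAbs := by
    apply Finset.prod_primes_dvd
    · intro p hp
      exact (hP p (Finset.mem_filter.mp hp).1).1.prime
    · intro p hp
      have h := (Finset.mem_filter.mp hp).2
      exact Int.natCast_dvd_natCast.mp ((Int.dvd_natAbs).mpr h)
  have hNA : (0 : ℕ) < t.natAbs := Int.natAbs_pos.mpr ht0
  have habs : ((t.natAbs : ℕ) : ℝ) = |(t : ℝ)| := by
    push_cast [Nat.cast_natAbs]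
    ring
  have hle : ((∏ p ∈ D, p : ℕ) : ℝ) ≤ V := by
    have h1 : (∏ p ∈ D, p) ≤ t.natAbs := Nat.le_of_dvd hNA hdvd
    calc ((∏ p ∈ D, p : ℕ) : ℝ) ≤ (t.natAbs : ℝ) := by exact_mod_cast h1
      _ = |(t : ℝ)| := habs
      _ ≤ V := htV
  have hpow : m ^ D.card ≤ ((∏ p ∈ D, p : ℕ) : ℝ) := by
    rw [Nat.cast_prod, ← Finset.prod_const]
    exact Finset.prod_le_prod (fun _ _ => le_of_lt hm0)
      (fun p hp => (hP p (Finset.mem_filter.mp hp).1).2)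
  have hpowV : m ^ D.card ≤ V := hpow.trans hle
  have hlog := Real.log_le_log (by positivity) hpowV
  rw [Real.log_pow] at hlog
  exact (le_div_iff₀ hlogm).mpr hlog

/-- Averaging: some prime in `P'` divides at most `|S| · log V / (|P'| log m)` elements. -/
lemma stmt3_exists_good_prime (m V : ℝ) (hm : 2 ≤ m)
    (P' : Finset ℕ) (hP : ∀ p ∈ P', Nat.Prime p ∧ m ≤ (p : ℝ)) (hne : P'.Nonempty)
    (S : Finset ℤ) (hS : ∀ t ∈ S, t ≠ 0 ∧ |(t : ℝ)| ≤ V) :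
    ∃ p ∈ P', ((S.filter (fun t : ℤ => (p : ℤ) ∣ t)).card : ℝ) ≤
      (S.card : ℝ) * (Real.log V / Real.log m) / P'.card := by
  have hsum : ∑ p ∈ P', ((S.filter (fun t : ℤ => (p : ℤ) ∣ t)).card : ℝ) ≤
      (S.card : ℝ) * (Real.log V / Real.log m) := by
    have hswap : ∑ p ∈ P', ((S.filter (fun t : ℤ => (p : ℤ) ∣ t)).card : ℝ) =
        ∑ t ∈ S, ((P'.filter (fun p : ℕ => (p : ℤ) ∣ t)).card : ℝ) := by
      simp only [Finset.card_filter]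
      push_cast
      rw [Finset.sum_comm]
    rw [hswap]
    calc ∑ t ∈ S, ((P'.filter (fun p : ℕ => (p : ℤ) ∣ t)).card : ℝ)
        ≤ ∑ _t ∈ S, (Real.log V / Real.log m) := by
          apply Finset.sum_le_sum
          intro t ht
          exact stmt3_count_primes_le m V hm P' hP t (hS t ht).1 (hS t ht).2
      _ = (S.card : ℝ) * (Real.log V / Real.log m) := by
          rw [Finset.sum_const, nsmul_eq_mul]
  have hcard : (0 : ℝ) < P'.card := by exact_mod_cast Finset.card_pos.mpr hne
  have h2 : ∑ p ∈ P', ((S.filter (fun t : ℤ => (p : ℤ) ∣ t)).card : ℝ) ≤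
      ∑ _p ∈ P', (S.card : ℝ) * (Real.log V / Real.log m) / P'.card := by
    rw [Finset.sum_const, nsmul_eq_mul, mul_div_cancel₀ _ (ne_of_gt hcard)]
    exact hsum
  exact Finset.exists_le_of_sum_le hne h2

/-- The iterated selection, by induction on `R`, with uniform availability bound `K`. -/
lemma stmt3_aux (m V : ℝ) (hm : 2 ≤ m) (hV : 1 ≤ V) (K : ℕ) (hK : 1 ≤ K) :
    ∀ R : ℕ, ∀ P' : Finset ℕ, (∀ p ∈ P', Nat.Prime p ∧ m ≤ (p : ℝ)) →
    ∀ S : Finset ℤ, (∀ t ∈ S, t ≠ 0 ∧ |(t : ℝ)| ≤ V) →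
    R ≤ P'.card → K + R ≤ P'.card + 1 →
    ∃ Q ⊆ P', Q.card = R ∧
      ((S.filter (fun t : ℤ => ((∏ p ∈ Q, p : ℕ) : ℤ) ∣ t)).card : ℝ) ≤
        (S.card : ℝ) * (Real.log V / ((K : ℝ) * Real.log m)) ^ R := by
  intro R
  induction R with
  | zero =>
    intro P' hP S hS _ _
    refine ⟨∅, Finset.empty_subset _, rfl, ?_⟩
    simp [Finset.filter_true_of_mem]
  | succ R ih =>
    intro P' hP S hS hRP hKP
    have hlogm : 0 < Real.log m := Real.log_pos (lt_of_lt_of_le one_lt_two hm)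
    have hlogV : 0 ≤ Real.log V := Real.log_nonneg hV
    have hne : P'.Nonempty := Finset.card_pos.mp (lt_of_lt_of_le (Nat.succ_pos R) hRP)
    obtain ⟨p, hpP, hple⟩ := stmt3_exists_good_prime m V hm P' hP hne S hS
    have hKle : K ≤ P'.card := by omega
    set F : ℝ := Real.log V / ((K : ℝ) * Real.log m) with hF
    have hKpos' : (0 : ℝ) < K := by exact_mod_cast hK
    have hF0 : 0 ≤ F := by positivity
    have hple' : ((S.filter (fun t : ℤ => (p : ℤ) ∣ t)).card : ℝ) ≤ (S.card : ℝ) * F := by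
      have hPc : (0 : ℝ) < P'.card := by exact_mod_cast Finset.card_pos.mpr hne
      have hA : (0 : ℝ) ≤ (S.card : ℝ) * (Real.log V / Real.log m) := by positivity
      have hstep : (S.card : ℝ) * (Real.log V / Real.log m) / P'.card ≤
          (S.card : ℝ) * (Real.log V / Real.log m) / K :=
        div_le_div_of_nonneg_left hA hKpos' (by exact_mod_cast hKle)
      have heq : (S.card : ℝ) * (Real.log V / Real.log m) / K = (S.card : ℝ) * F := by
        rw [hF]
        field_simp
      exact hple.trans (hstep.trans_eq heq)
    -- apply the induction hypothesis to the remaining primes and surviving elements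
    set S' : Finset ℤ := S.filter (fun t : ℤ => (p : ℤ) ∣ t) with hS'
    have hS'sub : ∀ t ∈ S', t ≠ 0 ∧ |(t : ℝ)| ≤ V := fun t ht =>
      hS t (Finset.mem_filter.mp ht).1
    have hcard_erase : (P'.erase p).card = P'.card - 1 := Finset.card_erase_of_mem hpP
    have h1 : R ≤ (P'.erase p).card := by omega
    have h2 : K + R ≤ (P'.erase p).card + 1 := by omega
    obtain ⟨Q', hQ'sub, hQ'card, hQ'le⟩ := ih (P'.erase p)
      (fun q hq => hP q (Finset.mem_of_mem_erase hq)) S' hS'sub h1 h2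
    have hpQ' : p ∉ Q' := fun h => Finset.notMem_erase p P' (hQ'sub h)
    refine ⟨insert p Q', ?_, ?_, ?_⟩
    · intro q hq
      rcases Finset.mem_insert.mp hq with h | h
      · exact h ▸ hpP
      · exact Finset.mem_of_mem_erase (hQ'sub h)
    · rw [Finset.card_insert_of_notMem hpQ', hQ'card]
    · have hprod : (∏ q ∈ insert p Q', q) = p * ∏ q ∈ Q', q :=
        Finset.prod_insert hpQ'
      have hsubset : S.filter (fun t : ℤ => ((∏ q ∈ insert p Q', q : ℕ) : ℤ) ∣ t) ⊆
          S'.filter (fun t : ℤ => ((∏ q ∈ Q', q : ℕ) : ℤ) ∣ t) := by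
        intro t ht
        obtain ⟨htS, htd⟩ := Finset.mem_filter.mp ht
        rw [hprod] at htd
        rw [Nat.cast_mul] at htd
        refine Finset.mem_filter.mpr ⟨Finset.mem_filter.mpr ⟨htS, ?_⟩, ?_⟩
        · exact (dvd_mul_right ((p : ℤ)) _).trans htd
        · exact (dvd_mul_left _ ((p : ℤ))).trans htd
      calc ((S.filter (fun t : ℤ => ((∏ q ∈ insert p Q', q : ℕ) : ℤ) ∣ t)).card : ℝ)
          ≤ ((S'.filter (fun t : ℤ => ((∏ q ∈ Q', q : ℕ) : ℤ) ∣ t)).card : ℝ) := by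
            exact_mod_cast Finset.card_le_card hsubset
        _ ≤ (S'.card : ℝ) * F ^ R := hQ'le
        _ ≤ ((S.card : ℝ) * F) * F ^ R := by
            apply mul_le_mul_of_nonneg_right hple' (by positivity)
        _ = (S.card : ℝ) * F ^ (R + 1) := by ring

/-- Iterated prime selection: given primes `P` each at least `m ≥ 2`, nonzero integers `T`
each of absolute value at most `V ≥ 1`, and `1 ≤ R ≤ |P|`, there are `R` distinct primes in
`P` (a subset `Q ⊆ P` of cardinality `R`) whose product divides at most
`|T| · (log V / ((|P| − R + 1) · log m))^R` elements of `T`. -/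
theorem stmt_3 (m V : ℝ) (hm : 2 ≤ m) (hV : 1 ≤ V)
    (P : Finset ℕ) (hP : ∀ p ∈ P, Nat.Prime p ∧ m ≤ (p : ℝ))
    (T : Finset ℤ) (hT : ∀ t ∈ T, t ≠ 0 ∧ |(t : ℝ)| ≤ V)
    (R : ℕ) (hR : 1 ≤ R) (hRP : R ≤ P.card) :
    ∃ Q ⊆ P, Q.card = R ∧
      ((T.filter (fun t : ℤ => ((∏ p ∈ Q, p : ℕ) : ℤ) ∣ t)).card : ℝ) ≤
        (T.card : ℝ) * (Real.log V / (((P.card - R + 1 : ℕ) : ℝ) * Real.log m)) ^ R := by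
  exact stmt3_aux m V hm hV (P.card - R + 1) (by omega) R P hP T hT hRP (by omega)
end

section
/- Let m be a positive natural number and let A be a finite set of natural numbers. Define A' = {a mod m : a ∈ A} ∪ {(a mod m) + m : a ∈ A}. Then there exist a, b, c ∈ A with a + b ≡ c (mod m) if and only if there exist x, y, z ∈ A' with x + y = z. -/
/-- Let `m > 0` and let `A` be a finite set of naturals. With
`A' = {a % m : a ∈ A} ∪ {a % m + m : a ∈ A}`, the set `A` has a pseudo-solution
`a + b ≡ c (mod m)` iff `A'` has an exact 3SUM solution `x + y = z`. -/
theorem stmt_4 (m : ℕ) (hm : 0 < m) (A : Finset ℕ) :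
    (∃ a ∈ A, ∃ b ∈ A, ∃ c ∈ A, a + b ≡ c [MOD m]) ↔
      (∃ x ∈ A.image (fun a => a % m) ∪ A.image (fun a => a % m + m),
        ∃ y ∈ A.image (fun a => a % m) ∪ A.image (fun a => a % m + m),
          ∃ z ∈ A.image (fun a => a % m) ∪ A.image (fun a => a % m + m),
            x + y = z) := by
  constructor
  · rintro ⟨a, ha, b, hb, c, hc, h⟩
    refine ⟨a % m, ?_, b % m, ?_, a % m + b % m, ?_, rfl⟩
    · exact Finset.mem_union_left _ (Finset.mem_image_of_mem _ ha)
    · exact Finset.mem_union_left _ (Finset.mem_image_of_mem _ hb)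
    · have hmod : (a % m + b % m) % m = c % m := by
        rw [← Nat.add_mod]; exact h
      by_cases hlt : a % m + b % m < m
      · have : a % m + b % m = c % m := by
          rw [← hmod, Nat.mod_eq_of_lt hlt]
        rw [this]
        exact Finset.mem_union_left _ (Finset.mem_image_of_mem _ hc)
      · have ha' := Nat.mod_lt a hm
        have hb' := Nat.mod_lt b hm
        have h2 : a % m + b % m = c % m + m := by
          have e1 : (a % m + b % m) % m = (a % m + b % m - m) % m :=
            Nat.mod_eq_sub_mod (by omega)
          have e2 : (a % m + b % m - m) % m = a % m + b % m - m :=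
            Nat.mod_eq_of_lt (by omega)
          omega
        rw [h2]
        exact Finset.mem_union_right _ (Finset.mem_image_of_mem _ hc)
  · rintro ⟨x, hx, y, hy, z, hz, hxyz⟩
    have key : ∀ w ∈ A.image (fun a => a % m) ∪ A.image (fun a => a % m + m),
        ∃ a ∈ A, w % m = a % m := by
      intro w hw
      rcases Finset.mem_union.1 hw with hw | hw <;>
        obtain ⟨a, ha, rfl⟩ := Finset.mem_image.1 hw
      · exact ⟨a, ha, by simp [Nat.mod_mod]⟩
      · exact ⟨a, ha, by simp [Nat.add_mod, Nat.mod_mod]⟩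
    obtain ⟨a, ha, hax⟩ := key x hx
    obtain ⟨b, hb, hby⟩ := key y hy
    obtain ⟨c, hc, hcz⟩ := key z hz
    refine ⟨a, ha, b, hb, c, hc, ?_⟩
    unfold Nat.ModEq
    calc (a + b) % m = (a % m + b % m) % m := by rw [Nat.add_mod]
    _ = (x % m + y % m) % m := by rw [hax, hby]
    _ = (x + y) % m := by rw [← Nat.add_mod]
    _ = z % m := by rw [hxyz]
    _ = c % m := by rw [hcz]
end

section
/- Let U ≥ 1 and g ≥ 1 be natural numbers and let A be a finite set of integers contained in the interval [0, U] with |A| = n. Then A can be partitioned into at most g parts such that every part has cardinality at most 4⌈n/g⌉ and is contained in an interval of length at most 4⌈U/g⌉. -/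
/-- rank of `a`: number of elements of `A` strictly below `a`. -/
private def rank3 (A : Finset ℤ) (a : ℤ) : ℕ := (A.filter (fun b => b < a)).card

private lemma rank3_mono (A : Finset ℤ) {a b : ℤ} (h : a ≤ b) : rank3 A a ≤ rank3 A b := by
  apply Finset.card_le_card
  intro x hx
  simp only [Finset.mem_filter] at *
  exact ⟨hx.1, lt_of_lt_of_le hx.2 h⟩

private lemma rank3_strict {A : Finset ℤ} {a b : ℤ} (ha : a ∈ A) (hab : a < b) :
    rank3 A a < rank3 A b := by
  apply Finset.card_lt_card
  refine (Finset.ssubset_iff_of_subset ?_).mpr ⟨a, ?_, ?_⟩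
  · intro x hx
    simp only [Finset.mem_filter] at *
    exact ⟨hx.1, lt_trans hx.2 hab⟩
  · simp [Finset.mem_filter, ha, hab]
  · simp [Finset.mem_filter]

private lemma rank3_lt_card {A : Finset ℤ} {a : ℤ} (ha : a ∈ A) : rank3 A a < A.card := by
  apply Finset.card_lt_card
  refine (Finset.ssubset_iff_of_subset (Finset.filter_subset _ _)).mpr ⟨a, ha, ?_⟩
  simp [Finset.mem_filter]

/-- the key of `a`. -/
private def key3 (A : Finset ℤ) (L : ℤ) (s : ℕ) (a : ℤ) : ℕ :=
  (a / L).toNat + rank3 A a / s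

private lemma key3_fiber {A : Finset ℤ} {L : ℤ} {s : ℕ} (hL : 0 < L) {a b : ℤ}
    (h : key3 A L s a = key3 A L s b) :
    (a / L).toNat = (b / L).toNat ∧ rank3 A a / s = rank3 A b / s := by
  unfold key3 at h
  rcases le_total a b with hab | hab
  · have h1 : (a / L).toNat ≤ (b / L).toNat := Int.toNat_le_toNat (Int.ediv_le_ediv hL hab)
    have h2 : rank3 A a / s ≤ rank3 A b / s := Nat.div_le_div_right (rank3_mono A hab)
    omega
  · have h1 : (b / L).toNat ≤ (a / L).toNat := Int.toNat_le_toNat (Int.ediv_le_ediv hL hab)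
    have h2 : rank3 A b / s ≤ rank3 A a / s := Nat.div_le_div_right (rank3_mono A hab)
    omega

/-- Let `U, g ≥ 1` and let `A ⊆ [0, U]` be a finite set of integers with `|A| = n`. Then `A`
can be partitioned into at most `g` parts, each of cardinality at most `4⌈n/g⌉` and contained
in an interval of length at most `4⌈U/g⌉`. -/
theorem stmt_5 (U g : ℕ) (hU : 1 ≤ U) (hg : 1 ≤ g)
    (A : Finset ℤ) (hA : ∀ a ∈ A, 0 ≤ a ∧ a ≤ (U : ℤ)) (n : ℕ) (hn : A.card = n) :
    ∃ parts : Finset (Finset ℤ),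
      parts.card ≤ g ∧
      (∀ P ∈ parts, ∀ Q ∈ parts, P ≠ Q → Disjoint P Q) ∧
      parts.biUnion id = A ∧
      ∀ P ∈ parts,
        ((P.card : ℤ) ≤ 4 * ⌈(n : ℝ) / (g : ℝ)⌉ ∧
          ∃ lo hi : ℤ, hi - lo ≤ 4 * ⌈(U : ℝ) / (g : ℝ)⌉ ∧ ∀ a ∈ P, lo ≤ a ∧ a ≤ hi) := by
  have hg0 : (0:ℝ) < (g:ℝ) := by exact_mod_cast hg
  rcases Nat.eq_zero_or_pos n with hn0 | hn1
  · -- A is empty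
    have hAe : A = ∅ := Finset.card_eq_zero.mp (by omega)
    exact ⟨∅, by simpa using hg, by simp, by simp [hAe], by simp⟩
  -- main case : n ≥ 1
  set CU : ℤ := ⌈(U : ℝ) / (g : ℝ)⌉ with hCUdef
  set CN : ℤ := ⌈(n : ℝ) / (g : ℝ)⌉ with hCNdef
  have hCU1 : 1 ≤ CU := by
    have : (0:ℝ) < (U:ℝ) / (g:ℝ) := by
      apply div_pos _ hg0
      exact_mod_cast hU
    exact Int.ceil_pos.mpr this
  have hCN1 : 1 ≤ CN := by
    have : (0:ℝ) < (n:ℝ) / (g:ℝ) := by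
      apply div_pos _ hg0
      exact_mod_cast hn1
    exact Int.ceil_pos.mpr this
  set cU : ℕ := CU.toNat with hcUdef
  set cn : ℕ := CN.toNat with hcndef
  have hcUc : (cU : ℤ) = CU := Int.toNat_of_nonneg (by omega)
  have hcnc : (cn : ℤ) = CN := Int.toNat_of_nonneg (by omega)
  have hcU1 : 1 ≤ cU := by omega
  have hcn1 : 1 ≤ cn := by omega
  have hUg : U ≤ g * cU := by
    have h1 : (U:ℝ) ≤ (CU:ℝ) * g := (div_le_iff₀ hg0).mp (Int.le_ceil _)
    have hcUr : (cU:ℝ) = (CU:ℝ) := by exact_mod_cast hcUc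
    have h2 : (U:ℝ) ≤ ((g * cU : ℕ) : ℝ) := by push_cast; rw [hcUr]; linarith
    exact_mod_cast h2
  have hng : n ≤ g * cn := by
    have h1 : (n:ℝ) ≤ (CN:ℝ) * g := (div_le_iff₀ hg0).mp (Int.le_ceil _)
    have hcnr : (cn:ℝ) = (CN:ℝ) := by exact_mod_cast hcnc
    have h2 : (n:ℝ) ≤ ((g * cn : ℕ) : ℝ) := by push_cast; rw [hcnr]; linarith
    exact_mod_cast h2
  set L : ℤ := 2 * (cU : ℤ) with hLdef
  set s : ℕ := 2 * cn with hsdef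
  have hL0 : 0 < L := by
    have : (1:ℤ) ≤ (cU:ℤ) := by exact_mod_cast hcU1
    omega
  have hs0 : 0 < s := by omega
  -- key is bounded by g
  have key_lt : ∀ a ∈ A, key3 A L s a < g := by
    intro a ha
    obtain ⟨ha0, haU⟩ := hA a ha
    have h1 : (a / L).toNat ≤ g / 2 := by
      have e1 : a / L ≤ (U:ℤ) / L := Int.ediv_le_ediv hL0 haU
      have e2 : ((U / (2 * cU) : ℕ) : ℤ) = (U:ℤ) / L := by
        rw [hLdef]; push_cast [Int.natCast_ediv]; ring_nf
      have e3 : U / (2 * cU) ≤ g * cU / (2 * cU) := Nat.div_le_div_right hUg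
      have e4 : g * cU / (2 * cU) = g / 2 := by
        rw [mul_comm 2 cU, mul_comm g cU]
        exact Nat.mul_div_mul_left g 2 (by omega)
      have e5 : (a / L).toNat ≤ U / (2 * cU) := by
        have e1' : a / L ≤ ((U / (2 * cU) : ℕ) : ℤ) := by rw [e2]; exact e1
        exact Int.toNat_le.mpr e1'
      omega
    have h2 : rank3 A a / s ≤ (g - 1) / 2 := by
      have e1 : rank3 A a < n := hn ▸ rank3_lt_card ha
      have e2 : rank3 A a / s < (g - 1) / 2 + 1 := by
        rw [Nat.div_lt_iff_lt_mul hs0]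
        have e3 : g ≤ ((g - 1) / 2 + 1) * 2 := by omega
        calc rank3 A a < n := e1
          _ ≤ g * cn := hng
          _ ≤ (((g - 1) / 2 + 1) * 2) * cn := Nat.mul_le_mul_right cn e3
          _ = ((g - 1) / 2 + 1) * s := by rw [hsdef]; ring
      omega
    have : key3 A L s a = (a / L).toNat + rank3 A a / s := rfl
    omega
  -- the parts
  set parts : Finset (Finset ℤ) :=
    A.image (fun a => A.filter (fun b => key3 A L s b = key3 A L s a)) with hpartsdef
  refine ⟨parts, ?_, ?_, ?_, ?_⟩
  · -- card bound
    have e1 : parts = (A.image (key3 A L s)).image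
        (fun k => A.filter (fun b => key3 A L s b = k)) := by
      rw [hpartsdef, Finset.image_image]
      rfl
    rw [e1]
    calc ((A.image (key3 A L s)).image _).card ≤ (A.image (key3 A L s)).card :=
          Finset.card_image_le
      _ ≤ (Finset.range g).card := by
          apply Finset.card_le_card
          intro k hk
          obtain ⟨a, ha, rfl⟩ := Finset.mem_image.mp hk
          exact Finset.mem_range.mpr (key_lt a ha)
      _ = g := Finset.card_range g
  · -- disjointness
    intro P hP Q hQ hPQ
    obtain ⟨a, ha, rfl⟩ := Finset.mem_image.mp hP
    obtain ⟨b, hb, rfl⟩ := Finset.mem_image.mp hQ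
    have hk : key3 A L s a ≠ key3 A L s b := by
      intro h; exact hPQ (by rw [h])
    rw [Finset.disjoint_left]
    intro x hx hx'
    simp only [Finset.mem_filter] at hx hx'
    exact hk (hx.2 ▸ hx'.2 ▸ rfl)
  · -- union is A
    ext x
    simp only [Finset.mem_biUnion, id_eq, hpartsdef, Finset.mem_image]
    constructor
    · rintro ⟨P, ⟨a, ha, rfl⟩, hxP⟩
      exact (Finset.mem_filter.mp hxP).1
    · intro hx
      exact ⟨A.filter (fun b => key3 A L s b = key3 A L s x), ⟨x, hx, rfl⟩,
        Finset.mem_filter.mpr ⟨hx, rfl⟩⟩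
  · -- per-part bounds
    intro P hP
    obtain ⟨a₀, ha₀, rfl⟩ := Finset.mem_image.mp hP
    set P := A.filter (fun b => key3 A L s b = key3 A L s a₀) with hPdef
    constructor
    · -- cardinality bound
      have hcard : P.card ≤ s := by
        set q : ℕ := rank3 A a₀ / s with hq
        have hmem : ∀ b ∈ P, rank3 A b ∈ Finset.Ico (q * s) (q * s + s) := by
          intro b hb
          obtain ⟨hbA, hbk⟩ := Finset.mem_filter.mp hb
          have hdiv : rank3 A b / s = q := (key3_fiber hL0 hbk).2
          have h1 : q * s + rank3 A b % s = rank3 A b := by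
            rw [← hdiv]; exact Nat.div_add_mod' _ _
          have h2 : rank3 A b % s < s := Nat.mod_lt (rank3 A b) hs0
          rw [Finset.mem_Ico]
          omega
        have hinj : Set.InjOn (rank3 A) ↑P := by
          intro x hx y hy hxy
          have hxA : x ∈ A := (Finset.mem_filter.mp hx).1
          have hyA : y ∈ A := (Finset.mem_filter.mp hy).1
          by_contra hne
          rcases lt_or_gt_of_ne hne with h | h
          · exact absurd hxy (Nat.ne_of_lt (rank3_strict hxA h))
          · exact absurd hxy.symm (Nat.ne_of_lt (rank3_strict hyA h))
        calc P.card ≤ (Finset.Ico (q * s) (q * s + s)).card :=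
              Finset.card_le_card_of_injOn (rank3 A) hmem hinj
          _ = s := by rw [Nat.card_Ico]; omega
      have h1 : (P.card : ℤ) ≤ (s : ℤ) := by exact_mod_cast hcard
      have h2 : (s : ℤ) = 2 * CN := by rw [hsdef]; push_cast [hcnc]; ring
      linarith [h1, h2, hCN1]
    · -- interval bound
      set j : ℕ := (a₀ / L).toNat with hj
      refine ⟨(j : ℤ) * L, (j : ℤ) * L + L - 1, ?_, ?_⟩
      · have : L = 2 * CU := by rw [hLdef, hcUc]
        omega
      · intro b hb
        obtain ⟨hbA, hbk⟩ := Finset.mem_filter.mp hb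
        have hb0 : 0 ≤ b := (hA b hbA).1
        have hdivnn : 0 ≤ b / L := Int.ediv_nonneg hb0 (le_of_lt hL0)
        have htn : (b / L).toNat = j := (key3_fiber hL0 hbk).1
        have hdiv : b / L = (j : ℤ) := by rw [← htn, Int.toNat_of_nonneg hdivnn]
        have h1 := Int.mul_ediv_add_emod b L
        have h2 := Int.emod_nonneg b (ne_of_gt hL0)
        have h3 := Int.emod_lt_of_pos b hL0
        rw [hdiv] at h1
        constructor <;> nlinarith [h1, h2, h3]
end

section
/- Let g ≥ 1 be a natural number and let l, u : {1, …, g} → ℤ satisfy l(i) ≤ u(i) for all i and u(i) < l(j) whenever i < j. Then the number of triples (i, j, k) ∈ {1, …, g}³ with l(i) + l(j) ≤ u(k) and l(k) ≤ u(i) + u(j) is at most (2g + 1)². -/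
/-- Let `g ≥ 1` and let `l, u : {1, …, g} → ℤ` be lower/upper endpoints of `g` disjoint
intervals in increasing order (`l i ≤ u i`, and `u i < l j` for `i < j`). Then the number of
nontrivial triples `(i, j, k)`, i.e. those with `l i + l j ≤ u k` and `l k ≤ u i + u j`,
is at most `(2g + 1)²`. -/
theorem stmt_7 (g : ℕ) (hg : 1 ≤ g) (l u : ℕ → ℤ)
    (hlu : ∀ i ∈ Finset.Icc 1 g, l i ≤ u i)
    (hord : ∀ i ∈ Finset.Icc 1 g, ∀ j ∈ Finset.Icc 1 g, i < j → u i < l j) :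
    ((Finset.Icc 1 g ×ˢ Finset.Icc 1 g ×ˢ Finset.Icc 1 g).filter
      (fun t : ℕ × ℕ × ℕ => l t.1 + l t.2.1 ≤ u t.2.2 ∧ l t.2.2 ≤ u t.1 + u t.2.1)).card ≤
      (2 * g + 1) ^ 2 := by
  classical
  have hmem : ∀ m : ℕ, 1 ≤ m → m ≤ g → m ∈ Finset.Icc 1 g := by
    intro m h1 h2; exact Finset.mem_Icc.mpr ⟨h1, h2⟩
  have key := Finset.card_le_card_of_injOn
    (f := fun t : ℕ × ℕ × ℕ => (((t.1 : ℤ) + t.2.2), ((t.2.1 : ℤ) - t.1)))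
    (s := (Finset.Icc 1 g ×ˢ Finset.Icc 1 g ×ˢ Finset.Icc 1 g).filter
      (fun t : ℕ × ℕ × ℕ => l t.1 + l t.2.1 ≤ u t.2.2 ∧ l t.2.2 ≤ u t.1 + u t.2.1))
    (t := Finset.Icc (0 : ℤ) (2 * g) ×ˢ Finset.Icc (-(g : ℤ)) g)
    (by
      intro t ht
      simp only [Finset.mem_coe, Finset.mem_filter, Finset.mem_product, Finset.mem_Icc] at ht ⊢
      obtain ⟨⟨⟨h1a, h1b⟩, ⟨h2a, h2b⟩, h3a, h3b⟩, _⟩ := ht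
      constructor
      · constructor <;> push_cast <;> omega
      · constructor <;> push_cast <;> omega)
    (by
      intro x hx y hy hxy
      simp only [Finset.mem_coe, Finset.mem_filter, Finset.mem_product, Finset.mem_Icc] at hx hy
      obtain ⟨⟨⟨hx1a, hx1b⟩, ⟨hx2a, hx2b⟩, hx3a, hx3b⟩, hxc1, hxc2⟩ := hx
      obtain ⟨⟨⟨hy1a, hy1b⟩, ⟨hy2a, hy2b⟩, hy3a, hy3b⟩, hyc1, hyc2⟩ := hy
      rw [Prod.ext_iff] at hxy
      obtain ⟨e1, e2⟩ := hxy
      simp only at e1 e2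
      rcases lt_trichotomy x.1 y.1 with h | h | h
      · -- x.1 < y.1 ⇒ x.2.1 < y.2.1, y.2.2 < x.2.2
        have h2 : x.2.1 < y.2.1 := by omega
        have h3 : y.2.2 < x.2.2 := by omega
        have A := hord x.1 (hmem _ hx1a hx1b) y.1 (hmem _ hy1a hy1b) h
        have B := hord x.2.1 (hmem _ hx2a hx2b) y.2.1 (hmem _ hy2a hy2b) h2
        have C := hord y.2.2 (hmem _ hy3a hy3b) x.2.2 (hmem _ hx3a hx3b) h3
        linarith
      · have h2 : x.2.1 = y.2.1 := by omega
        have h3 : x.2.2 = y.2.2 := by omega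
        exact Prod.ext h (Prod.ext h2 h3)
      · have h2 : y.2.1 < x.2.1 := by omega
        have h3 : x.2.2 < y.2.2 := by omega
        have A := hord y.1 (hmem _ hy1a hy1b) x.1 (hmem _ hx1a hx1b) h
        have B := hord y.2.1 (hmem _ hy2a hy2b) x.2.1 (hmem _ hx2a hx2b) h2
        have C := hord x.2.2 (hmem _ hx3a hx3b) y.2.2 (hmem _ hy3a hy3b) h3
        linarith)
  refine key.trans ?_
  rw [Finset.card_product, Int.card_Icc, Int.card_Icc]
  have : ((2 * (g : ℤ) + 1 - 0).toNat) = 2 * g + 1 := by omega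
  have h2 : (((g : ℤ) + 1 - -(g : ℤ)).toNat) = 2 * g + 1 := by omega
  rw [this, h2, pow_two]
end

section
/- Let U ≥ 1 and g ≥ 1 be natural numbers and let A be a finite set of integers contained in [0, U] with |A| = n. Then there exist a partition of A into parts A₁, …, A_g (some possibly empty) and a set of triples R ⊆ {1, …, g}³ with |R| ≤ (2g + 1)² such that: every part A_i has cardinality at most 4⌈n/g⌉ and is contained in an interval of length at most 4⌈U/g⌉; and for all a, b, c ∈ A with a + b = c there is some (i, j, k) ∈ R with a ∈ A_i, b ∈ A_j, and c ∈ A_k. -/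
lemma aux_sorted_getD (l : List ℤ) (hs : l.Pairwise (· ≤ ·)) {i j : ℕ} (hij : i ≤ j)
    (hj : j < l.length) : l.getD i 0 ≤ l.getD j 0 := by
  have hi : i < l.length := lt_of_le_of_lt hij hj
  rw [List.getD_eq_get l 0 ⟨i, hi⟩, List.getD_eq_get l 0 ⟨j, hj⟩]
  rcases lt_or_eq_of_le hij with h | h
  · exact hs.rel_get_of_lt (by simpa using h)
  · subst h; rfl

lemma aux_sortedpos (l : List ℤ) (hs : l.Pairwise (· ≤ ·)) {t : ℕ} (ht : t + 1 < l.length)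
    {z : ℤ} (hz : z ∈ l) (h : l.getD t 0 < z) : l.getD (t + 1) 0 ≤ z := by
  obtain ⟨⟨t', ht'⟩, rfl⟩ := List.mem_iff_get.mp hz
  rcases le_or_gt (t + 1) t' with h1 | h1
  · rw [← List.getD_eq_get l 0 ⟨t', ht'⟩]
    exact aux_sorted_getD l hs h1 ht'
  · exfalso
    have : t' ≤ t := by omega
    have := aux_sorted_getD l hs this (by omega)
    rw [List.getD_eq_get l 0 ⟨t', ht'⟩] at this
    omega

lemma aux_rank (A : Finset ℤ) {n : ℕ} (hn : A.card = n) (i : Fin n) :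
    (A.filter (fun a => a < (A.orderIsoOfFin hn i : ℤ))).card = i := by
  set f := A.orderIsoOfFin hn with hf
  have himg : A.filter (fun a => a < (f i : ℤ)) =
      (Finset.univ.filter (fun j : Fin n => j < i)).image (fun j => (f j : ℤ)) := by
    ext a
    simp only [Finset.mem_filter, Finset.mem_image, Finset.mem_univ, true_and]
    constructor
    · rintro ⟨haA, hlt⟩
      refine ⟨f.symm ⟨a, haA⟩, ?_, by simp⟩
      rw [← f.lt_iff_lt]
      rw [OrderIso.apply_symm_apply]; exact hlt
    · rintro ⟨j, hj, rfl⟩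
      exact ⟨(f j).2, by exact_mod_cast (f.lt_iff_lt.mpr hj : f j < f i)⟩
  rw [himg, Finset.card_image_of_injective _ (fun a b h => f.injective (Subtype.coe_injective h))]
  have : Finset.univ.filter (fun j : Fin n => j < i) = Finset.Iio i := by ext j; simp
  rw [this, Fin.card_Iio]

lemma aux_count (A : Finset ℤ) {n g : ℕ} (hn : A.card = n) (mZ : ℕ)
    (hm : n ≠ 0 → 0 < mZ) (hng : n ≤ mZ * g) (x y : ℤ)
    (hq : ∀ l : ℕ, l < g - 1 → ∀ h : (l + 1) * mZ < n,
      ¬(x < (A.orderIsoOfFin hn ⟨(l + 1) * mZ, h⟩ : ℤ) ∧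
        (A.orderIsoOfFin hn ⟨(l + 1) * mZ, h⟩ : ℤ) < y)) :
    (A.filter (fun a => x ≤ a ∧ a < y)).card ≤ mZ := by
  by_contra hcon
  push_neg at hcon
  set mid := A.filter (fun a => x ≤ a ∧ a < y) with hmid
  have hmidA : mid ⊆ A := Finset.filter_subset _ _
  have hnpos : mZ + 1 ≤ n := by
    have := Finset.card_le_card hmidA
    omega
  have hmZpos : 0 < mZ := hm (by omega)
  set Nx := (A.filter (fun a => a < x)).card with hNx
  set Ny := (A.filter (fun a => a < y)).card with hNy
  have hdisj : Disjoint (A.filter (fun a => a < x)) mid := by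
    rw [Finset.disjoint_left]
    intro a ha hb
    rw [hmid, Finset.mem_filter] at hb
    rw [Finset.mem_filter] at ha
    omega
  have hsub : (A.filter (fun a => a < x)) ∪ mid ⊆ A.filter (fun a => a < y) := by
    intro a ha
    rw [Finset.mem_union, hmid, Finset.mem_filter, Finset.mem_filter] at ha
    rw [Finset.mem_filter]
    rcases ha with ha | ha
    · -- a < x, need a < y : need x ≤ y; mid nonempty gives x < y
      obtain ⟨b, hb⟩ := Finset.card_pos.mp (show 0 < mid.card by omega)
      rw [hmid, Finset.mem_filter] at hb
      exact ⟨ha.1, by omega⟩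
    · exact ⟨ha.1, ha.2.2⟩
  have hcard : Nx + mid.card ≤ Ny := by
    have := Finset.card_le_card hsub
    rwa [Finset.card_union_of_disjoint hdisj] at this
  have hNyn : Ny ≤ n := by
    have := Finset.card_le_card (Finset.filter_subset (fun a => a < y) A)
    omega
  -- the rank cut
  set r := (Nx / mZ + 1) * mZ with hr
  have e1 : r = mZ * (Nx / mZ) + mZ := by rw [hr]; ring
  have e2 : mZ * (Nx / mZ) + Nx % mZ = Nx := Nat.div_add_mod Nx mZ
  have e3 : Nx % mZ < mZ := Nat.mod_lt Nx hmZpos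
  have hr1 : Nx < r := by omega
  have hr2 : r ≤ Nx + mZ := by omega
  have hrn : r < n := by omega
  have hlg : Nx / mZ < g - 1 := by
    have h1 : (Nx / mZ + 1) * mZ < mZ * g := by omega
    rw [mul_comm mZ g] at h1
    have := Nat.lt_of_mul_lt_mul_right h1
    -- Nx/mZ + 1 < g
    omega
  set q : ℤ := (A.orderIsoOfFin hn ⟨r, hrn⟩ : ℤ) with hqdef
  have hNq : (A.filter (fun a => a < q)).card = r := aux_rank A hn ⟨r, hrn⟩
  have hxq : x < q := by
    by_contra hle
    push_neg at hle
    have : A.filter (fun a => a < q) ⊆ A.filter (fun a => a < x) := by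
      intro a ha; rw [Finset.mem_filter] at *
      exact ⟨ha.1, lt_of_lt_of_le ha.2 hle⟩
    have := Finset.card_le_card this
    omega
  have hqy : q < y := by
    by_contra hle
    push_neg at hle
    have : A.filter (fun a => a < y) ⊆ A.filter (fun a => a < q) := by
      intro a ha; rw [Finset.mem_filter] at *
      exact ⟨ha.1, lt_of_lt_of_le ha.2 hle⟩
    have := Finset.card_le_card this
    omega
  exact hq (Nx / mZ) hlg hrn ⟨hxq, hqy⟩

set_option maxHeartbeats 2000000 in
/-- Deterministic self-reduction for 3SUM (combinatorial content): for `U, g ≥ 1` and a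
finite set `A ⊆ [0, U]` of integers with `|A| = n`, there is a partition of `A` into parts
`A₁, …, A_g` (possibly empty) and a set of triples `R ⊆ {1, …, g}³` of size at most
`(2g+1)²` such that each part has cardinality at most `4⌈n/g⌉` and fits in an interval of
length at most `4⌈U/g⌉`, and every solution `a + b = c` in `A` is captured by some triple
of `R`. -/
theorem stmt_8 (U g : ℕ) (hU : 1 ≤ U) (hg : 1 ≤ g)
    (A : Finset ℤ) (hA : ∀ a ∈ A, 0 ≤ a ∧ a ≤ (U : ℤ)) (n : ℕ) (hn : A.card = n) :
    ∃ (parts : ℕ → Finset ℤ) (R : Finset (ℕ × ℕ × ℕ)),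
      (∀ i ∈ Finset.Icc 1 g, ∀ j ∈ Finset.Icc 1 g, i ≠ j → Disjoint (parts i) (parts j)) ∧
      (Finset.Icc 1 g).biUnion parts = A ∧
      R ⊆ Finset.Icc 1 g ×ˢ Finset.Icc 1 g ×ˢ Finset.Icc 1 g ∧
      R.card ≤ (2 * g + 1) ^ 2 ∧
      (∀ i ∈ Finset.Icc 1 g,
        ((parts i).card : ℤ) ≤ 4 * ⌈(n : ℝ) / (g : ℝ)⌉ ∧
          ∃ lo hi : ℤ, hi - lo ≤ 4 * ⌈(U : ℝ) / (g : ℝ)⌉ ∧ ∀ a ∈ parts i, lo ≤ a ∧ a ≤ hi) ∧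
      (∀ a ∈ A, ∀ b ∈ A, ∀ c ∈ A, a + b = c →
        ∃ t ∈ R, a ∈ parts t.1 ∧ b ∈ parts t.2.1 ∧ c ∈ parts t.2.2) := by
  have hg0 : (0:ℝ) < (g:ℝ) := by positivity
  set Λ : ℤ := ⌈(U : ℝ) / (g : ℝ)⌉ with hΛdef
  set M : ℤ := ⌈(n : ℝ) / (g : ℝ)⌉ with hMdef
  have hΛ1 : 1 ≤ Λ := by
    rw [hΛdef, Int.le_ceil_iff]
    have : (0:ℝ) < (U:ℝ) / g := by positivity
    simpa using this
  have hΛU : (U : ℤ) ≤ Λ * g := by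
    have h1 : (U : ℝ) / g ≤ (Λ : ℝ) := Int.le_ceil _
    rw [div_le_iff₀ hg0] at h1
    exact_mod_cast h1
  have hM0 : 0 ≤ M := by
    rw [hMdef]
    exact Int.ceil_nonneg (by positivity)
  have hMn : (n : ℤ) ≤ M * g := by
    have h1 : (n : ℝ) / g ≤ (M : ℝ) := Int.le_ceil _
    rw [div_le_iff₀ hg0] at h1
    exact_mod_cast h1
  set mZ : ℕ := M.toNat with hmZdef
  have hmZM : (mZ : ℤ) = M := Int.toNat_of_nonneg hM0
  have hnmZ : n ≤ mZ * g := by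
    have : (n : ℤ) ≤ (mZ : ℤ) * g := by rw [hmZM]; exact hMn
    exact_mod_cast this
  have hmZpos : n ≠ 0 → 0 < mZ := by
    intro hne
    rcases Nat.eq_zero_or_pos mZ with h | h
    · exfalso; rw [h] at hnmZ; simp at hnmZ; omega
    · exact h
  -- the order isomorphism (sorted enumeration of A)
  set f := A.orderIsoOfFin hn with hfdef
  -- value cuts and rank cuts
  set vfun : ℕ → ℤ := fun s => if s < g then min (Λ * s) (U + 1) else (U + 1) with hvdef
  set qfun : ℕ → ℤ := fun l =>
    if h : (l + 1) * mZ < n then (f ⟨(l + 1) * mZ, h⟩ : ℤ) else (U + 1) with hqdef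
  set S : Multiset ℤ := ((Multiset.range (g + 1)).map vfun) +
    ((Multiset.range (g - 1)).map qfun) + {(U + 1 : ℤ)} with hSdef
  set L : List ℤ := Multiset.sort S (· ≤ ·) with hLdef
  have hlen : L.length = 2 * g + 1 := by
    rw [hLdef, Multiset.length_sort, hSdef]
    simp
    omega
  have hsort : L.Pairwise (· ≤ ·) := by rw [hLdef]; exact Multiset.pairwise_sort _ _
  have hmemL : ∀ z ∈ L, 0 ≤ z ∧ z ≤ U + 1 := by
    intro z hz
    rw [hLdef, Multiset.mem_sort, hSdef] at hz
    simp only [Multiset.mem_add, Multiset.mem_map, Multiset.mem_range,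
      Multiset.mem_singleton] at hz
    rcases hz with (⟨s, hs, rfl⟩ | ⟨l, hl, rfl⟩) | rfl
    · rw [hvdef]
      dsimp only
      split
      · constructor
        · exact le_min (by positivity) (by positivity)
        · exact le_trans (min_le_right _ _) le_rfl
      · constructor
        · positivity
        · exact le_rfl
    · rw [hqdef]
      dsimp only
      split
      · rename_i h
        have := hA _ (f ⟨(l + 1) * mZ, h⟩).2
        constructor
        · exact this.1
        · linarith [this.2]
      · exact ⟨by positivity, le_rfl⟩
    · exact ⟨by positivity, le_rfl⟩
  have hvmem : ∀ s, s ≤ g → vfun s ∈ L := by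
    intro s hs
    rw [hLdef, Multiset.mem_sort, hSdef]
    simp only [Multiset.mem_add, Multiset.mem_map, Multiset.mem_range, Multiset.mem_singleton]
    left; left; exact ⟨s, by omega, rfl⟩
  have hqmem : ∀ l, l < g - 1 → qfun l ∈ L := by
    intro l hl
    rw [hLdef, Multiset.mem_sort, hSdef]
    simp only [Multiset.mem_add, Multiset.mem_map, Multiset.mem_range, Multiset.mem_singleton]
    left; right; exact ⟨l, hl, rfl⟩
  have hpadmem : (U + 1 : ℤ) ∈ L := by
    rw [hLdef, Multiset.mem_sort, hSdef]
    simp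
  -- the coarse cuts
  set c : ℕ → ℤ := fun k => L.getD (2 * k) 0 with hcdef
  have hcmono : ∀ k k' : ℕ, k ≤ k' → k' ≤ g → c k ≤ c k' := by
    intro k k' h1 h2
    exact aux_sorted_getD L hsort (by omega) (by omega)
  have hgetmem : ∀ t : ℕ, t ≤ 2 * g → L.getD t 0 ∈ L := by
    intro t ht
    rw [List.getD_eq_get L 0 ⟨t, by omega⟩]
    exact List.get_mem L _
  have hfirst : ∀ z ∈ L, L.getD 0 0 ≤ z := by
    intro z hz
    obtain ⟨⟨t', ht'⟩, rfl⟩ := List.mem_iff_get.mp hz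
    rw [← List.getD_eq_get L 0 ⟨t', ht'⟩]
    exact aux_sorted_getD L hsort (Nat.zero_le _) ht'
  have hlast : ∀ z ∈ L, z ≤ L.getD (2 * g) 0 := by
    intro z hz
    obtain ⟨⟨t', ht'⟩, rfl⟩ := List.mem_iff_get.mp hz
    rw [← List.getD_eq_get L 0 ⟨t', ht'⟩]
    exact aux_sorted_getD L hsort (by omega) (by omega)
  have hc0 : c 0 ≤ 0 := by
    have h0 : vfun 0 ∈ L := hvmem 0 (by omega)
    have h1 : vfun 0 = 0 := by
      rw [hvdef]
      dsimp only
      rw [if_pos (by omega : 0 < g)]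
      simp only [Nat.cast_zero, mul_zero]
      exact min_eq_left (by positivity)
    simp only [hcdef]
    have := hfirst _ h0
    rw [h1] at this
    simpa using this
  have hcg : (U : ℤ) < c g := by
    have := hlast _ hpadmem
    simp only [hcdef]
    omega
  -- gap bound between consecutive cuts
  have hGAP : ∀ t : ℕ, t + 1 ≤ 2 * g → L.getD (t + 1) 0 - L.getD t 0 ≤ Λ + 1 := by
    intro t ht
    set x := L.getD t 0 with hx
    set y := L.getD (t + 1) 0 with hy
    have hxmem : x ∈ L := hgetmem t (by omega)
    have hymem : y ∈ L := hgetmem (t + 1) (by omega)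
    by_cases hxU : (U + 1 : ℤ) ≤ x
    · have := (hmemL y hymem).2
      omega
    · push_neg at hxU
      set T := (Finset.range (g + 1)).filter (fun s => vfun s ≤ x) with hT
      have hTne : T.Nonempty := by
        refine ⟨0, ?_⟩
        rw [hT, Finset.mem_filter, Finset.mem_range]
        refine ⟨by omega, ?_⟩
        rw [hvdef]
        dsimp only
        rw [if_pos (by omega : 0 < g)]
        simp only [Nat.cast_zero, mul_zero]
        exact le_trans (min_le_left _ _) (by simpa using (hmemL x hxmem).1)
      set s := T.max' hTne with hs
      have hsmem : s ∈ T := T.max'_mem hTne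
      rw [hT, Finset.mem_filter, Finset.mem_range] at hsmem
      have hsg : s < g := by
        by_contra hcon
        have hsg' : s = g := by omega
        have : vfun g ≤ x := hsg' ▸ hsmem.2
        rw [hvdef] at this
        dsimp only at this
        rw [if_neg (by omega)] at this
        omega
      have hnot : ¬ (vfun (s + 1) ≤ x) := by
        intro hcon
        have : s + 1 ∈ T := by
          rw [hT, Finset.mem_filter, Finset.mem_range]
          exact ⟨by omega, hcon⟩
        have := T.le_max' _ this
        omega
      push_neg at hnot
      have hyv : y ≤ vfun (s + 1) :=
        aux_sortedpos L hsort (by omega) (hvmem (s + 1) (by omega)) hnot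
      have hvgap : vfun (s + 1) - vfun s ≤ Λ + 1 := by
        have hvs : vfun s = min (Λ * s) (U + 1) := by
          rw [hvdef]; dsimp only; rw [if_pos hsg]
        by_cases hsg1 : s + 1 < g
        · have hvs1 : vfun (s + 1) = min (Λ * (s + 1 : ℕ)) (U + 1) := by
            rw [hvdef]; dsimp only; rw [if_pos hsg1]
          rw [hvs, hvs1]
          push_cast
          rcases le_total (Λ * (s : ℤ)) (U + 1) with h | h
          · rw [min_eq_left h]
            have : min (Λ * ((s : ℤ) + 1)) (U + 1) ≤ Λ * ((s : ℤ) + 1) := min_le_left _ _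
            nlinarith
          · rw [min_eq_right h]
            have : min (Λ * ((s : ℤ) + 1)) (U + 1) ≤ U + 1 := min_le_right _ _
            linarith
        · have hseq : s + 1 = g := by omega
          have hvs1 : vfun (s + 1) = (U + 1 : ℤ) := by
            rw [hvdef]; dsimp only; rw [if_neg (by omega)]
          rw [hvs, hvs1]
          have hcast : (s : ℤ) = (g : ℤ) - 1 := by
            have : (s : ℤ) + 1 = g := by exact_mod_cast congrArg (Nat.cast : ℕ → ℤ) hseq
            omega
          rcases le_total (Λ * (s : ℤ)) (U + 1) with h | h
          · rw [min_eq_left h, hcast]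
            nlinarith
          · rw [min_eq_right h]
            omega
      have := hsmem.2
      omega
  -- count bound between consecutive cuts
  have hCNT : ∀ t : ℕ, t + 1 ≤ 2 * g →
      (A.filter (fun a => L.getD t 0 ≤ a ∧ a < L.getD (t + 1) 0)).card ≤ mZ := by
    intro t ht
    apply aux_count A hn mZ hmZpos hnmZ
    intro l hl hln hcon
    have hq : qfun l = (A.orderIsoOfFin hn ⟨(l + 1) * mZ, hln⟩ : ℤ) := by
      rw [hqdef]; dsimp only; rw [dif_pos hln]
    have hmem : (A.orderIsoOfFin hn ⟨(l + 1) * mZ, hln⟩ : ℤ) ∈ L := hq ▸ hqmem l hl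
    have := aux_sortedpos L hsort (t := t) (by omega) hmem hcon.1
    have := hcon.2
    omega
  -- the parts
  set parts : ℕ → Finset ℤ := fun k => A.filter (fun a => c (k - 1) ≤ a ∧ a < c k)
    with hpartsdef
  have hpartsmem : ∀ k : ℕ, ∀ a : ℤ, a ∈ parts k ↔ (a ∈ A ∧ c (k - 1) ≤ a ∧ a < c k) := by
    intro k a
    rw [hpartsdef]
    exact Finset.mem_filter
  set R : Finset (ℕ × ℕ × ℕ) := ((Finset.Icc 1 g) ×ˢ (Finset.Icc 1 g) ×ˢ (Finset.Icc 1 g)).filter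
    (fun t => c (t.1 - 1) + c (t.2.1 - 1) < c t.2.2 ∧ c (t.2.2 - 1) < c t.1 + c t.2.1)
    with hRdef
  have hRmem : ∀ t : ℕ × ℕ × ℕ, t ∈ R ↔ ((1 ≤ t.1 ∧ t.1 ≤ g) ∧ (1 ≤ t.2.1 ∧ t.2.1 ≤ g) ∧
      (1 ≤ t.2.2 ∧ t.2.2 ≤ g) ∧
      c (t.1 - 1) + c (t.2.1 - 1) < c t.2.2 ∧ c (t.2.2 - 1) < c t.1 + c t.2.1) := by
    intro t
    rw [hRdef, Finset.mem_filter]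
    simp only [Finset.mem_product, Finset.mem_Icc]
    exact ⟨fun h => ⟨h.1.1, h.1.2.1, h.1.2.2, h.2.1, h.2.2⟩,
      fun h => ⟨⟨h.1, h.2.1, h.2.2.1⟩, h.2.2.2.1, h.2.2.2.2⟩⟩
  have hcL : ∀ k : ℕ, c k = L.getD (2 * k) 0 := by intro k; simp only [hcdef]
  clear_value f S L c parts R
  clear hfdef hSdef hLdef hcdef hpartsdef hRdef hvdef hqdef hΛdef hMdef hmZdef
  have hcover : ∀ a ∈ A, ∃ k, 1 ≤ k ∧ k ≤ g ∧ a ∈ parts k := by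
    intro a ha
    have ha0 : 0 ≤ a := (hA a ha).1
    have haU : a ≤ U := (hA a ha).2
    have hT2ne : ((Finset.Icc 1 g).filter (fun k => c (k - 1) ≤ a)).Nonempty := by
      refine ⟨1, ?_⟩
      rw [Finset.mem_filter, Finset.mem_Icc]
      refine ⟨⟨le_rfl, hg⟩, ?_⟩
      have e : (1 : ℕ) - 1 = 0 := rfl
      rw [e]
      exact le_trans hc0 ha0
    obtain ⟨k, hkmem, hkmax⟩ : ∃ k ∈ (Finset.Icc 1 g).filter (fun k => c (k - 1) ≤ a),
        ∀ x ∈ (Finset.Icc 1 g).filter (fun k => c (k - 1) ≤ a), x ≤ k :=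
      ⟨_, Finset.max'_mem _ hT2ne, fun x hx => Finset.le_max' _ x hx⟩
    rw [Finset.mem_filter, Finset.mem_Icc] at hkmem
    refine ⟨k, hkmem.1.1, hkmem.1.2, ?_⟩
    rw [hpartsmem]
    refine ⟨ha, hkmem.2, ?_⟩
    by_cases hkg : k = g
    · rw [hkg]; omega
    · by_contra hcon
      push_neg at hcon
      have hmem2 : k + 1 ∈ (Finset.Icc 1 g).filter (fun k => c (k - 1) ≤ a) := by
        rw [Finset.mem_filter, Finset.mem_Icc]
        refine ⟨⟨by omega, by omega⟩, ?_⟩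
        have e : k + 1 - 1 = k := rfl
        rw [e]
        exact hcon
      have := hkmax _ hmem2
      omega
  refine ⟨parts, R, ?_, ?_, ?_, ?_, ?_, ?_⟩
  · -- disjointness
    intro i hi j hj hij
    rw [Finset.mem_Icc] at hi hj
    rw [Finset.disjoint_left]
    intro a hai haj
    rw [hpartsmem] at hai haj
    rcases lt_or_gt_of_ne hij with h | h
    · have : c i ≤ c (j - 1) := hcmono i (j - 1) (by omega) (by omega)
      omega
    · have : c j ≤ c (i - 1) := hcmono j (i - 1) (by omega) (by omega)
      omega
  · -- biUnion
    ext a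
    rw [Finset.mem_biUnion]
    constructor
    · rintro ⟨k, hk, hak⟩
      exact ((hpartsmem k a).mp hak).1
    · intro ha
      obtain ⟨k, h1, h2, h3⟩ := hcover a ha
      exact ⟨k, Finset.mem_Icc.mpr ⟨h1, h2⟩, h3⟩
  · -- R subset
    intro t ht
    rw [hRmem] at ht
    simp only [Finset.mem_product, Finset.mem_Icc]
    exact ⟨ht.1, ht.2.1, ht.2.2.1⟩
  · -- R card
    have hinj : Set.InjOn (fun t : ℕ × ℕ × ℕ =>
        if c (t.1 - 1) + c (t.2.1 - 1) ≤ c (t.2.2 - 1) then (t.1 + g - t.2.1, t.2.2)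
        else (t.1, t.2.1 + g)) ↑R := by
      rintro ⟨i, j, k⟩ ht ⟨i', j', k'⟩ ht' heq
      rw [Finset.mem_coe, hRmem] at ht ht'
      dsimp only at ht ht' heq
      obtain ⟨⟨hi1, hi2⟩, ⟨hj1, hj2⟩, ⟨hk1, hk2⟩, hv1, hv2⟩ := ht
      obtain ⟨⟨hi1', hi2'⟩, ⟨hj1', hj2'⟩, ⟨hk1', hk2'⟩, hv1', hv2'⟩ := ht'
      split_ifs at heq with hA hA' hA'
      · -- both type A
        rw [Prod.mk.injEq] at heq
        obtain ⟨heq1, heq2⟩ := heq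
        subst heq2
        have hii : i = i' := by
          by_contra hne
          rcases Nat.lt_or_ge i i' with h | h
          · have m1 : c i ≤ c (i' - 1) := hcmono i (i' - 1) (by omega) (by omega)
            have m2 : c j ≤ c (j' - 1) := hcmono j (j' - 1) (by omega) (by omega)
            omega
          · have h' : i' < i := by omega
            have m1 : c i' ≤ c (i - 1) := hcmono i' (i - 1) (by omega) (by omega)
            have m2 : c j' ≤ c (j - 1) := hcmono j' (j - 1) (by omega) (by omega)
            omega
        subst hii
        have hjj : j = j' := by omega
        subst hjj
        rfl
      · exfalso; rw [Prod.mk.injEq] at heq; omega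
      · exfalso; rw [Prod.mk.injEq] at heq; omega
      · -- both type B
        rw [Prod.mk.injEq] at heq
        obtain ⟨heq1, heq2⟩ := heq
        subst heq1
        have hjj : j = j' := by omega
        subst hjj
        have hkk : k = k' := by
          rcases lt_trichotomy k k' with h | h | h
          · have m1 : c k ≤ c (k' - 1) := hcmono k (k' - 1) (by omega) (by omega)
            omega
          · exact h
          · have m1 : c k' ≤ c (k - 1) := hcmono k' (k - 1) (by omega) (by omega)
            omega
        subst hkk
        rfl
    have hmaps : ∀ t ∈ R, (if c (t.1 - 1) + c (t.2.1 - 1) ≤ c (t.2.2 - 1) then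
        (t.1 + g - t.2.1, t.2.2) else (t.1, t.2.1 + g)) ∈
        Finset.Icc 1 (2 * g) ×ˢ Finset.Icc 1 (2 * g) := by
      intro t ht
      rw [hRmem] at ht
      split_ifs
      · simp only [Finset.mem_product, Finset.mem_Icc]
        omega
      · simp only [Finset.mem_product, Finset.mem_Icc]
        omega
    calc R.card ≤ (Finset.Icc 1 (2 * g) ×ˢ Finset.Icc 1 (2 * g)).card :=
          Finset.card_le_card_of_injOn _ hmaps hinj
      _ = (2 * g) * (2 * g) := by
          rw [Finset.card_product, Nat.card_Icc, Nat.add_sub_cancel]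
      _ ≤ (2 * g + 1) ^ 2 := by nlinarith
  · -- per-part bounds
    intro i hi
    rw [Finset.mem_Icc] at hi
    obtain ⟨hi1, hi2⟩ := hi
    have e0 : 2 * (i - 1) = 2 * i - 2 := by omega
    have hc1 : c (i - 1) = L.getD (2 * i - 2) 0 := by rw [hcL, e0]
    have hc2 : c i = L.getD ((2 * i - 2) + 2) 0 := by rw [hcL]; congr 1; omega
    constructor
    · -- cardinality
      have hsub : parts i ⊆
          (A.filter (fun a => L.getD (2 * i - 2) 0 ≤ a ∧ a < L.getD ((2 * i - 2) + 1) 0)) ∪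
          (A.filter (fun a => L.getD ((2 * i - 2) + 1) 0 ≤ a ∧ a < L.getD ((2 * i - 2) + 2) 0)) := by
        intro a ha
        rw [hpartsmem] at ha
        rw [hc1, hc2] at ha
        rw [Finset.mem_union, Finset.mem_filter, Finset.mem_filter]
        rcases le_or_gt (L.getD ((2 * i - 2) + 1) 0) a with h | h
        · right; exact ⟨ha.1, h, ha.2.2⟩
        · left; exact ⟨ha.1, ha.2.1, h⟩
      have h1 := hCNT (2 * i - 2) (by omega)
      have h2 := hCNT ((2 * i - 2) + 1) (by omega)
      have e21 : (2 * i - 2) + 1 + 1 = (2 * i - 2) + 2 := by omega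
      rw [e21] at h2
      have hcard : (parts i).card ≤ mZ + mZ :=
        le_trans (Finset.card_le_card hsub) (le_trans (Finset.card_union_le _ _) (by omega))
      have hcast : ((parts i).card : ℤ) ≤ (mZ : ℤ) + (mZ : ℤ) := by exact_mod_cast hcard
      rw [hmZM] at hcast
      linarith
    · -- interval
      refine ⟨c (i - 1), c i - 1, ?_, ?_⟩
      · have g1 := hGAP (2 * i - 2) (by omega)
        have g2 := hGAP ((2 * i - 2) + 1) (by omega)
        have e21 : (2 * i - 2) + 1 + 1 = (2 * i - 2) + 2 := by omega
        rw [e21] at g2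
        rw [hc1, hc2]
        omega
      · intro a ha
        rw [hpartsmem] at ha
        omega
  · -- coverage of solutions
    intro a ha b hb cc hcc habc
    obtain ⟨i, hi1, hi2, hai⟩ := hcover a ha
    obtain ⟨j, hj1, hj2, hbj⟩ := hcover b hb
    obtain ⟨k, hk1, hk2, hck⟩ := hcover cc hcc
    rw [hpartsmem] at hai hbj hck
    refine ⟨(i, j, k), ?_, ?_, ?_, ?_⟩
    · rw [hRmem]
      refine ⟨⟨hi1, hi2⟩, ⟨hj1, hj2⟩, ⟨hk1, hk2⟩, by dsimp only; omega, by dsimp only; omega⟩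
    · rw [hpartsmem]; exact hai
    · rw [hpartsmem]; exact hbj
    · rw [hpartsmem]; exact hck
end

section
/- Let N, S, U ≥ 1 be natural numbers and let A₁, …, A_N be finite sets of integers, each of cardinality at most S. Then there exist shifts s₁, …, s_N ∈ {0, …, U−1} such that U · Σ_{1 ≤ i < j ≤ N} ( |(A_i + s_i) ∩ (A_j + s_j)| + |(A_i + 2s_i) ∩ (A_j + 2s_j)| ) ≤ N² · S², where A + s denotes the set {a + s : a ∈ A}. -/
open Finset

lemma shift_count (N U : ℕ) (i j : Fin N) (hij : i ≠ j) (c d : ℤ) (hc : c ≠ 0) :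
    (Finset.univ.filter (fun s : Fin N → Fin U =>
        c * ((s i : ℕ) : ℤ) = d + c * ((s j : ℕ) : ℤ))).card ≤ U ^ (N - 1) := by
  have hcard : Fintype.card {k : Fin N // k ≠ i} = N - 1 := by
    have := Fintype.card_subtype_compl (fun k : Fin N => k = i)
    simpa using this
  calc (Finset.univ.filter (fun s : Fin N → Fin U =>
        c * ((s i : ℕ) : ℤ) = d + c * ((s j : ℕ) : ℤ))).card
      ≤ (Finset.univ : Finset ({k : Fin N // k ≠ i} → Fin U)).card := by
        apply Finset.card_le_card_of_injOn (fun s k => s k.1)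
        · intro _ _; exact Finset.mem_univ _
        · intro s hs t ht hst
          simp only [Finset.coe_filter, Set.mem_setOf_eq] at hs ht
          funext k
          by_cases hk : k = i
          · subst hk
            have hj : s j = t j := congrFun hst ⟨j, fun h => hij h.symm⟩
            have h1 : c * ((s k : ℕ) : ℤ) = c * ((t k : ℕ) : ℤ) := by rw [hs.2, ht.2, hj]
            have h2 := mul_left_cancel₀ hc h1
            exact Fin.ext (by exact_mod_cast h2)
          · exact congrFun hst ⟨k, hk⟩
    _ = U ^ (N - 1) := by
        simp [Finset.card_univ, Fintype.card_fun, hcard]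

lemma inter_le_pairs (X Y : Finset ℤ) (u v : ℤ) :
    ((X.image (fun a => a + u)) ∩ (Y.image (fun a => a + v))).card
      ≤ ((X ×ˢ Y).filter (fun ab => ab.1 + u = ab.2 + v)).card := by
  have hsub : (X.image (fun a => a + u)) ∩ (Y.image (fun a => a + v)) ⊆
      (((X ×ˢ Y).filter (fun ab => ab.1 + u = ab.2 + v)).image (fun ab => ab.1 + u)) := by
    intro z hz
    simp only [Finset.mem_inter, Finset.mem_image] at hz
    obtain ⟨⟨a, ha, hau⟩, ⟨b, hb, hbv⟩⟩ := hz
    refine Finset.mem_image.2 ⟨(a, b), ?_, hau⟩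
    simp [Finset.mem_filter, Finset.mem_product, ha, hb, hau.trans hbv.symm]
  exact (Finset.card_le_card hsub).trans (Finset.card_image_le)

lemma pairs_card (N : ℕ) :
    2 * ((Finset.univ : Finset (Fin N × Fin N)).filter (fun p => p.1 < p.2)).card ≤ N ^ 2 := by
  have hswap : ((Finset.univ : Finset (Fin N × Fin N)).filter (fun p => p.1 < p.2)).card
      = ((Finset.univ : Finset (Fin N × Fin N)).filter (fun p => p.2 < p.1)).card := by
    apply Finset.card_bij (fun p _ => (p.2, p.1))
    · intro p hp; simp only [Finset.mem_filter, Finset.mem_univ, true_and] at hp ⊢; exact hp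
    · intro p hp q hq h
      exact Prod.ext (congrArg Prod.snd h) (congrArg Prod.fst h)
    · intro p hp
      simp only [Finset.mem_filter, Finset.mem_univ, true_and] at hp
      exact ⟨(p.2, p.1), by simpa using hp, rfl⟩
  have hdisj : Disjoint ((Finset.univ : Finset (Fin N × Fin N)).filter (fun p => p.1 < p.2))
      ((Finset.univ : Finset (Fin N × Fin N)).filter (fun p => p.2 < p.1)) := by
    rw [Finset.disjoint_left]
    intro p hp hp'
    simp only [Finset.mem_filter] at hp hp'
    exact absurd (hp.2.trans hp'.2) (lt_irrefl _)
  calc 2 * ((Finset.univ : Finset (Fin N × Fin N)).filter (fun p => p.1 < p.2)).card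
      = ((Finset.univ : Finset (Fin N × Fin N)).filter (fun p => p.1 < p.2)).card
        + ((Finset.univ : Finset (Fin N × Fin N)).filter (fun p => p.2 < p.1)).card := by
        rw [← hswap]; ring
    _ = (((Finset.univ : Finset (Fin N × Fin N)).filter (fun p => p.1 < p.2))
        ∪ ((Finset.univ : Finset (Fin N × Fin N)).filter (fun p => p.2 < p.1))).card :=
        (Finset.card_union_of_disjoint hdisj).symm
    _ ≤ (Finset.univ : Finset (Fin N × Fin N)).card := Finset.card_le_card (Finset.subset_univ _)
    _ = N ^ 2 := by simp [sq]

lemma sum_inter (N S U : ℕ) (i j : Fin N) (hij : i ≠ j) (X Y : Finset ℤ)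
    (hX : X.card ≤ S) (hY : Y.card ≤ S) (c : ℤ) (hc : c ≠ 0) :
    ∑ σ : Fin N → Fin U,
      ((X.image (fun a => a + c * ((σ i : ℕ) : ℤ))) ∩
        (Y.image (fun a => a + c * ((σ j : ℕ) : ℤ)))).card
      ≤ S ^ 2 * U ^ (N - 1) := by
  calc ∑ σ : Fin N → Fin U,
      ((X.image (fun a => a + c * ((σ i : ℕ) : ℤ))) ∩
        (Y.image (fun a => a + c * ((σ j : ℕ) : ℤ)))).card
      ≤ ∑ σ : Fin N → Fin U, ((X ×ˢ Y).filter
          (fun ab => ab.1 + c * ((σ i : ℕ) : ℤ) = ab.2 + c * ((σ j : ℕ) : ℤ))).card :=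
        Finset.sum_le_sum (fun σ _ => inter_le_pairs X Y _ _)
    _ = ∑ σ : Fin N → Fin U, ∑ ab ∈ X ×ˢ Y,
          if ab.1 + c * ((σ i : ℕ) : ℤ) = ab.2 + c * ((σ j : ℕ) : ℤ) then 1 else 0 :=
        Finset.sum_congr rfl (fun σ _ => Finset.card_filter _ _)
    _ = ∑ ab ∈ X ×ˢ Y, ∑ σ : Fin N → Fin U,
          if ab.1 + c * ((σ i : ℕ) : ℤ) = ab.2 + c * ((σ j : ℕ) : ℤ) then 1 else 0 :=
        Finset.sum_comm
    _ ≤ ∑ _ab ∈ X ×ˢ Y, U ^ (N - 1) := by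
        apply Finset.sum_le_sum
        intro ab _
        have : ∑ σ : Fin N → Fin U,
            (if ab.1 + c * ((σ i : ℕ) : ℤ) = ab.2 + c * ((σ j : ℕ) : ℤ) then 1 else 0)
            = (Finset.univ.filter (fun σ : Fin N → Fin U =>
                c * ((σ i : ℕ) : ℤ) = (ab.2 - ab.1) + c * ((σ j : ℕ) : ℤ))).card := by
          rw [Finset.card_filter]
          apply Finset.sum_congr rfl
          intro σ _
          congr 1
          rw [eq_iff_iff]
          constructor <;> intro h <;> linarith
        rw [this]
        exact shift_count N U i j hij c _ hc
    _ = (X ×ˢ Y).card * U ^ (N - 1) := by rw [Finset.sum_const, smul_eq_mul]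
    _ ≤ S ^ 2 * U ^ (N - 1) := by
        apply Nat.mul_le_mul_right
        rw [Finset.card_product, sq]
        exact Nat.mul_le_mul hX hY

/-- Shift selection: for `N, S, U ≥ 1` and finite sets of integers `A₁, …, A_N` each of
cardinality at most `S`, there exist shifts `s₁, …, s_N ∈ {0, …, U−1}` with
`U · ∑_{i < j} (|(A_i + s_i) ∩ (A_j + s_j)| + |(A_i + 2s_i) ∩ (A_j + 2s_j)|) ≤ N² · S²`. -/
theorem stmt_12 (N S U : ℕ) (hN : 1 ≤ N) (hS : 1 ≤ S) (hU : 1 ≤ U)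
    (A : Fin N → Finset ℤ) (hA : ∀ i, (A i).card ≤ S) :
    ∃ s : Fin N → ℕ, (∀ i, s i < U) ∧
      U * ∑ p ∈ Finset.univ.filter (fun p : Fin N × Fin N => p.1 < p.2),
        (((A p.1).image (fun a => a + (s p.1 : ℤ)) ∩
            (A p.2).image (fun a => a + (s p.2 : ℤ))).card +
          ((A p.1).image (fun a => a + 2 * (s p.1 : ℤ)) ∩
            (A p.2).image (fun a => a + 2 * (s p.2 : ℤ))).card) ≤
        N ^ 2 * S ^ 2 := by
  haveI : NeZero U := ⟨Nat.one_le_iff_ne_zero.mp hU⟩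
  set F : (Fin N → Fin U) → ℕ := fun σ =>
    ∑ p ∈ Finset.univ.filter (fun p : Fin N × Fin N => p.1 < p.2),
      (((A p.1).image (fun a => a + ((σ p.1 : ℕ) : ℤ)) ∩
          (A p.2).image (fun a => a + ((σ p.2 : ℕ) : ℤ))).card +
        ((A p.1).image (fun a => a + 2 * ((σ p.1 : ℕ) : ℤ)) ∩
          (A p.2).image (fun a => a + 2 * ((σ p.2 : ℕ) : ℤ))).card) with hF
  have hsum : ∑ σ : Fin N → Fin U, F σ ≤ N ^ 2 * S ^ 2 * U ^ (N - 1) := by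
    calc ∑ σ : Fin N → Fin U, F σ
        = ∑ p ∈ Finset.univ.filter (fun p : Fin N × Fin N => p.1 < p.2),
            ∑ σ : Fin N → Fin U,
            (((A p.1).image (fun a => a + ((σ p.1 : ℕ) : ℤ)) ∩
                (A p.2).image (fun a => a + ((σ p.2 : ℕ) : ℤ))).card +
              ((A p.1).image (fun a => a + 2 * ((σ p.1 : ℕ) : ℤ)) ∩
                (A p.2).image (fun a => a + 2 * ((σ p.2 : ℕ) : ℤ))).card) := Finset.sum_comm
      _ ≤ ∑ p ∈ Finset.univ.filter (fun p : Fin N × Fin N => p.1 < p.2),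
            (S ^ 2 * U ^ (N - 1) + S ^ 2 * U ^ (N - 1)) := by
          apply Finset.sum_le_sum
          intro p hp
          simp only [Finset.mem_filter] at hp
          have hij : p.1 ≠ p.2 := ne_of_lt hp.2
          rw [Finset.sum_add_distrib]
          apply Nat.add_le_add
          · have h := sum_inter N S U p.1 p.2 hij (A p.1) (A p.2) (hA p.1) (hA p.2) 1 one_ne_zero
            simpa only [one_mul] using h
          · exact sum_inter N S U p.1 p.2 hij (A p.1) (A p.2) (hA p.1) (hA p.2) 2 two_ne_zero
      _ = ((Finset.univ.filter (fun p : Fin N × Fin N => p.1 < p.2)).card * 2)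
            * (S ^ 2 * U ^ (N - 1)) := by rw [Finset.sum_const, smul_eq_mul]; ring
      _ ≤ N ^ 2 * (S ^ 2 * U ^ (N - 1)) := by
          apply Nat.mul_le_mul_right
          rw [mul_comm]; exact pairs_card N
      _ = N ^ 2 * S ^ 2 * U ^ (N - 1) := by ring
  have havg : ∃ σ : Fin N → Fin U, U * F σ ≤ N ^ 2 * S ^ 2 := by
    have hne : (Finset.univ : Finset (Fin N → Fin U)).Nonempty := Finset.univ_nonempty
    have := Finset.exists_le_of_sum_le hne (f := fun σ => U * F σ)
      (g := fun _ => N ^ 2 * S ^ 2) ?_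
    · obtain ⟨σ, _, hσ⟩ := this; exact ⟨σ, hσ⟩
    · calc ∑ σ : Fin N → Fin U, U * F σ = U * ∑ σ : Fin N → Fin U, F σ := by
            rw [Finset.mul_sum]
        _ ≤ U * (N ^ 2 * S ^ 2 * U ^ (N - 1)) := Nat.mul_le_mul_left _ hsum
        _ = N ^ 2 * S ^ 2 * (U * U ^ (N - 1)) := by ring
        _ = N ^ 2 * S ^ 2 * U ^ N := by
            congr 1
            rw [← pow_succ']
            congr 1
            omega
        _ = ∑ _σ : Fin N → Fin U, N ^ 2 * S ^ 2 := by
            rw [Finset.sum_const, smul_eq_mul, Finset.card_univ, Fintype.card_fun]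
            simp [mul_comm]
  obtain ⟨σ, hσ⟩ := havg
  refine ⟨fun i => (σ i : ℕ), fun i => (σ i).isLt, ?_⟩
  exact hσ
end

section
/- Let N, S, U ≥ 1 be natural numbers, let α ≥ 1 be an integer, and let A₁, …, A_N be finite sets of integers, each of cardinality at most S. Then there exist shifts s₁, …, s_N ∈ {0, …, U−1} and subsets B_i ⊆ A_i such that, writing A_i' = A_i \ B_i: (1) for every integer a, the number of indices i with a ∈ A_i' + s_i is at most α, and the number of indices i with a ∈ A_i' + 2s_i is at most α; and (2) α · U · Σ_{i=1}^N |B_i| ≤ 2 · N² · S². -/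
open Finset

lemma heavy_bound {n S a : ℕ} (f : Fin n → Finset ℤ) (hf : ∀ i, (f i).card ≤ S) :
    a * ((Finset.univ.biUnion f).filter
      (fun x => a ≤ (Finset.univ.filter (fun i => x ∈ f i)).card)).card ≤ n * S := by
  set T := Finset.univ.biUnion f with hT
  set H := T.filter (fun x => a ≤ (Finset.univ.filter (fun i => x ∈ f i)).card) with hH
  calc a * H.card = ∑ _x ∈ H, a := by rw [Finset.sum_const, smul_eq_mul, mul_comm]
    _ ≤ ∑ x ∈ H, (univ.filter (fun i => x ∈ f i)).card :=
        Finset.sum_le_sum (fun x hx => (Finset.mem_filter.1 hx).2)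
    _ ≤ ∑ x ∈ T, (univ.filter (fun i => x ∈ f i)).card :=
        Finset.sum_le_sum_of_subset (Finset.filter_subset _ _)
    _ = ∑ i, (T.filter (fun x => x ∈ f i)).card := by
        simp_rw [Finset.card_filter]; exact Finset.sum_comm
    _ ≤ ∑ _i : Fin n, S := by
        refine Finset.sum_le_sum (fun i _ => ?_)
        exact le_trans (Finset.card_le_card (fun x hx => (Finset.mem_filter.1 hx).2)) (hf i)
    _ = n * S := by simp [mul_comm]

lemma shift_count_s13 (U : ℕ) (c x : ℤ) (hc : c ≠ 0) (H : Finset ℤ) :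
    ((Finset.range U).filter (fun t : ℕ => x + c * (t : ℤ) ∈ H)).card ≤ H.card := by
  refine Finset.card_le_card_of_injOn (fun t : ℕ => x + c * (t : ℤ)) ?_ ?_
  · exact fun t ht => (Finset.mem_filter.1 ht).2
  · intro t1 _ t2 _ h
    have : (t1 : ℤ) = t2 := mul_left_cancel₀ hc (add_left_cancel h)
    exact_mod_cast this

lemma update_load_le {N a : ℕ} (g g' : Fin N → Finset ℤ) (i₀ : Fin N)
    (hagree : ∀ i, i ≠ i₀ → g' i = g i)
    (hload : ∀ x : ℤ, (univ.filter fun i => x ∈ g i).card ≤ a)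
    (hG : ∀ x ∈ g' i₀, (univ.filter fun i => x ∈ g i).card < a)
    (x : ℤ) : (univ.filter fun i => x ∈ g' i).card ≤ a := by
  classical
  by_cases hmem : x ∈ g' i₀
  · have hlt := hG x hmem
    have hs1 : (univ.filter fun i => x ∈ g' i).erase i₀ ⊆ univ.filter fun i => x ∈ g i := by
      intro i hi
      obtain ⟨hne, hi⟩ := Finset.mem_erase.1 hi
      rw [Finset.mem_filter] at hi ⊢
      exact ⟨hi.1, by rw [← hagree i hne]; exact hi.2⟩
    have h2 : (univ.filter fun i => x ∈ g' i)
        ⊆ insert i₀ ((univ.filter fun i => x ∈ g' i).erase i₀) := by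
      intro j hj
      by_cases hj0 : j = i₀
      · subst hj0; exact Finset.mem_insert_self _ _
      · exact Finset.mem_insert_of_mem (Finset.mem_erase.2 ⟨hj0, hj⟩)
    have c2 := Finset.card_le_card h2
    have c3 := Finset.card_insert_le i₀ ((univ.filter fun i => x ∈ g' i).erase i₀)
    have c1 := Finset.card_le_card hs1
    omega
  · refine le_trans (Finset.card_le_card ?_) (hload x)
    intro i hi
    rw [Finset.mem_filter] at hi ⊢
    refine ⟨hi.1, ?_⟩
    rcases eq_or_ne i i₀ with rfl | hne
    · exact absurd hi.2 hmem
    · rw [← hagree i hne]; exact hi.2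

/-- Deterministic load balancing (existence form): for `N, S, U ≥ 1`, an integer `α ≥ 1`,
and finite sets of integers `A₁, …, A_N` each of cardinality at most `S`, there exist shifts
`s₁, …, s_N ∈ {0, …, U−1}` and leftover parts `B_i ⊆ A_i` such that, with `A_i' = A_i \ B_i`:
every integer is covered by at most `α` of the sets `A_i' + s_i` and by at most `α` of the
sets `A_i' + 2s_i`, and `α · U · ∑ i, |B_i| ≤ 2 · N² · S²`. -/
theorem stmt_13 (N S U : ℕ) (hN : 1 ≤ N) (hS : 1 ≤ S) (hU : 1 ≤ U)
    (α : ℕ) (hα : 1 ≤ α)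
    (A : Fin N → Finset ℤ) (hA : ∀ i, (A i).card ≤ S) :
    ∃ (s : Fin N → ℕ) (B : Fin N → Finset ℤ),
      (∀ i, s i < U) ∧ (∀ i, B i ⊆ A i) ∧
      (∀ a : ℤ,
        (Finset.univ.filter
          (fun i : Fin N => a ∈ ((A i) \ (B i)).image (fun x => x + (s i : ℤ)))).card ≤ α ∧
        (Finset.univ.filter
          (fun i : Fin N => a ∈ ((A i) \ (B i)).image (fun x => x + 2 * (s i : ℤ)))).card ≤ α) ∧
      α * U * ∑ i, (B i).card ≤ 2 * N ^ 2 * S ^ 2 := by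
  classical
  suffices key : ∀ n, n ≤ N → ∃ (s : Fin N → ℕ) (B : Fin N → Finset ℤ),
      (∀ i, s i < U) ∧ (∀ i, B i ⊆ A i) ∧
      (∀ a : ℤ,
        (Finset.univ.filter
          (fun i : Fin N => a ∈ ((A i) \ (B i)).image (fun x => x + (s i : ℤ)))).card ≤ α ∧
        (Finset.univ.filter
          (fun i : Fin N => a ∈ ((A i) \ (B i)).image (fun x => x + 2 * (s i : ℤ)))).card ≤ α) ∧
      α * U * ∑ i ∈ univ.filter (fun i : Fin N => i.val < n), (B i).card
        ≤ 2 * n * N * S ^ 2 by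
    obtain ⟨s, B, h1, h2, h3, h4⟩ := key N le_rfl
    refine ⟨s, B, h1, h2, h3, ?_⟩
    have hfull : (univ.filter (fun i : Fin N => i.val < N)) = univ :=
      Finset.filter_true_of_mem (fun i _ => i.isLt)
    rw [hfull] at h4
    calc α * U * ∑ i, (B i).card ≤ 2 * N * N * S ^ 2 := h4
      _ = 2 * N ^ 2 * S ^ 2 := by ring
  intro n
  induction n with
  | zero =>
    intro _
    refine ⟨fun _ => 0, A, fun _ => hU, fun _ => Finset.Subset.refl _, ?_, ?_⟩
    · intro a; constructor <;> simp
    · simp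
  | succ n ih =>
    intro hn1
    obtain ⟨s, B, hsU, hBA, hload, hsum⟩ := ih (Nat.le_of_succ_le hn1)
    set i₀ : Fin N := ⟨n, hn1⟩ with hi₀def
    set g : Fin N → Finset ℤ :=
      fun i => ((A i) \ (B i)).image (fun x => x + (s i : ℤ)) with hgdef
    set g2 : Fin N → Finset ℤ :=
      fun i => ((A i) \ (B i)).image (fun x => x + 2 * (s i : ℤ)) with hg2def
    set H1 := (Finset.univ.biUnion g).filter
      (fun x => α ≤ (Finset.univ.filter (fun i => x ∈ g i)).card) with hH1def
    set H2 := (Finset.univ.biUnion g2).filter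
      (fun x => α ≤ (Finset.univ.filter (fun i => x ∈ g2 i)).card) with hH2def
    have hgS : ∀ i, (g i).card ≤ S := fun i =>
      le_trans Finset.card_image_le (le_trans (Finset.card_le_card (Finset.sdiff_subset)) (hA i))
    have hg2S : ∀ i, (g2 i).card ≤ S := fun i =>
      le_trans Finset.card_image_le (le_trans (Finset.card_le_card (Finset.sdiff_subset)) (hA i))
    have hH1 : α * H1.card ≤ N * S := heavy_bound g hgS
    have hH2 : α * H2.card ≤ N * S := heavy_bound g2 hg2S
    set bad : ℕ → ℕ := fun t =>
      ((A i₀).filter (fun x => x + (t : ℤ) ∈ H1 ∨ x + 2 * (t : ℤ) ∈ H2)).card with hbaddef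
    -- averaging bound
    have hbadsum : α * ∑ t ∈ Finset.range U, bad t ≤ 2 * N * S ^ 2 := by
      have h1 : ∀ t : ℕ, bad t ≤ ((A i₀).filter (fun x => x + (t : ℤ) ∈ H1)).card
          + ((A i₀).filter (fun x => x + 2 * (t : ℤ) ∈ H2)).card := by
        intro t
        rw [hbaddef]
        simp only [Finset.filter_or]
        exact Finset.card_union_le _ _
      have h2 : ∑ t ∈ Finset.range U, ((A i₀).filter (fun x => x + (t : ℤ) ∈ H1)).card
          ≤ S * H1.card := by
        calc ∑ t ∈ Finset.range U, ((A i₀).filter (fun x => x + (t : ℤ) ∈ H1)).card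
            = ∑ x ∈ A i₀, ((Finset.range U).filter (fun t : ℕ => x + (t : ℤ) ∈ H1)).card := by
              simp_rw [Finset.card_filter]; exact Finset.sum_comm
          _ ≤ ∑ _x ∈ A i₀, H1.card := by
              refine Finset.sum_le_sum (fun x _ => ?_)
              have := shift_count_s13 U 1 x one_ne_zero H1
              simpa using this
          _ = (A i₀).card * H1.card := by rw [Finset.sum_const, smul_eq_mul]
          _ ≤ S * H1.card := Nat.mul_le_mul_right _ (hA i₀)
      have h3 : ∑ t ∈ Finset.range U, ((A i₀).filter (fun x => x + 2 * (t : ℤ) ∈ H2)).card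
          ≤ S * H2.card := by
        calc ∑ t ∈ Finset.range U, ((A i₀).filter (fun x => x + 2 * (t : ℤ) ∈ H2)).card
            = ∑ x ∈ A i₀, ((Finset.range U).filter (fun t : ℕ => x + 2 * (t : ℤ) ∈ H2)).card := by
              simp_rw [Finset.card_filter]; exact Finset.sum_comm
          _ ≤ ∑ _x ∈ A i₀, H2.card := by
              refine Finset.sum_le_sum (fun x _ => ?_)
              exact shift_count_s13 U 2 x two_ne_zero H2
          _ = (A i₀).card * H2.card := by rw [Finset.sum_const, smul_eq_mul]
          _ ≤ S * H2.card := Nat.mul_le_mul_right _ (hA i₀)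
      calc α * ∑ t ∈ Finset.range U, bad t
          ≤ α * (S * H1.card + S * H2.card) := by
            refine Nat.mul_le_mul_left _ ?_
            calc ∑ t ∈ Finset.range U, bad t
                ≤ ∑ t ∈ Finset.range U, (((A i₀).filter (fun x => x + (t : ℤ) ∈ H1)).card
                    + ((A i₀).filter (fun x => x + 2 * (t : ℤ) ∈ H2)).card) :=
                  Finset.sum_le_sum (fun t _ => h1 t)
              _ = ∑ t ∈ Finset.range U, ((A i₀).filter (fun x => x + (t : ℤ) ∈ H1)).card
                    + ∑ t ∈ Finset.range U, ((A i₀).filter (fun x => x + 2 * (t : ℤ) ∈ H2)).card :=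
                  Finset.sum_add_distrib
              _ ≤ S * H1.card + S * H2.card := add_le_add h2 h3
        _ = S * (α * H1.card) + S * (α * H2.card) := by ring
        _ ≤ S * (N * S) + S * (N * S) :=
            add_le_add (Nat.mul_le_mul_left _ hH1) (Nat.mul_le_mul_left _ hH2)
        _ = 2 * N * S ^ 2 := by ring
    -- pick the best shift
    obtain ⟨t0, ht0U, ht0min⟩ :=
      Finset.exists_min_image (Finset.range U) bad ⟨0, Finset.mem_range.2 hU⟩
    have hUbad : U * bad t0 ≤ ∑ t ∈ Finset.range U, bad t := by
      calc U * bad t0 = ∑ _t ∈ Finset.range U, bad t0 := by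
            rw [Finset.sum_const, Finset.card_range, smul_eq_mul]
        _ ≤ ∑ t ∈ Finset.range U, bad t := Finset.sum_le_sum (fun t ht => ht0min t ht)
    set Bi0 := (A i₀).filter (fun x => x + (t0 : ℤ) ∈ H1 ∨ x + 2 * (t0 : ℤ) ∈ H2) with hBi0def
    refine ⟨Function.update s i₀ t0, Function.update B i₀ Bi0, ?_, ?_, ?_, ?_⟩
    · intro i
      rcases eq_or_ne i i₀ with rfl | h
      · rw [Function.update_self]; exact Finset.mem_range.1 ht0U
      · rw [Function.update_of_ne h]; exact hsU i
    · intro i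
      rcases eq_or_ne i i₀ with rfl | h
      · rw [Function.update_self]; exact Finset.filter_subset _ _
      · rw [Function.update_of_ne h]; exact hBA i
    · -- load conditions
      intro a
      have key1 : ∀ x ∈ ((A i₀) \ Bi0).image (fun y => y + (t0 : ℤ)),
          (univ.filter fun i => x ∈ g i).card < α := by
        intro x hx
        obtain ⟨y, hy, rfl⟩ := Finset.mem_image.1 hx
        obtain ⟨hyA, hyB⟩ := Finset.mem_sdiff.1 hy
        have hnH1 : y + (t0 : ℤ) ∉ H1 := fun hc =>
          hyB (Finset.mem_filter.2 ⟨hyA, Or.inl hc⟩)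
        by_contra hge
        push_neg at hge
        have hpos : 0 < (univ.filter fun i => y + (t0 : ℤ) ∈ g i).card :=
          lt_of_lt_of_le hα hge
        obtain ⟨i, hi⟩ := Finset.card_pos.1 hpos
        have haT : y + (t0 : ℤ) ∈ Finset.univ.biUnion g :=
          Finset.mem_biUnion.2 ⟨i, Finset.mem_univ i, (Finset.mem_filter.1 hi).2⟩
        exact hnH1 (Finset.mem_filter.2 ⟨haT, hge⟩)
      have key2 : ∀ x ∈ ((A i₀) \ Bi0).image (fun y => y + 2 * (t0 : ℤ)),
          (univ.filter fun i => x ∈ g2 i).card < α := by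
        intro x hx
        obtain ⟨y, hy, rfl⟩ := Finset.mem_image.1 hx
        obtain ⟨hyA, hyB⟩ := Finset.mem_sdiff.1 hy
        have hnH2 : y + 2 * (t0 : ℤ) ∉ H2 := fun hc =>
          hyB (Finset.mem_filter.2 ⟨hyA, Or.inr hc⟩)
        by_contra hge
        push_neg at hge
        have hpos : 0 < (univ.filter fun i => y + 2 * (t0 : ℤ) ∈ g2 i).card :=
          lt_of_lt_of_le hα hge
        obtain ⟨i, hi⟩ := Finset.card_pos.1 hpos
        have haT : y + 2 * (t0 : ℤ) ∈ Finset.univ.biUnion g2 :=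
          Finset.mem_biUnion.2 ⟨i, Finset.mem_univ i, (Finset.mem_filter.1 hi).2⟩
        exact hnH2 (Finset.mem_filter.2 ⟨haT, hge⟩)
      constructor
      · refine update_load_le g
          (fun i => ((A i) \ (Function.update B i₀ Bi0 i)).image
            (fun x => x + ((Function.update s i₀ t0 i : ℕ) : ℤ))) i₀ ?_ (fun x => (hload x).1) ?_ a
        · intro i h
          simp only [Function.update_of_ne h]; rfl
        · intro x hx
          refine key1 x ?_
          simp only [Function.update_self] at hx
          exact hx
      · refine update_load_le g2
          (fun i => ((A i) \ (Function.update B i₀ Bi0 i)).image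
            (fun x => x + 2 * ((Function.update s i₀ t0 i : ℕ) : ℤ))) i₀ ?_ (fun x => (hload x).2) ?_ a
        · intro i h
          simp only [Function.update_of_ne h]; rfl
        · intro x hx
          refine key2 x ?_
          simp only [Function.update_self] at hx
          exact hx
    · -- the sum bound
      have hfilter : univ.filter (fun i : Fin N => i.val < n + 1)
          = insert i₀ (univ.filter (fun i : Fin N => i.val < n)) := by
        ext i
        simp only [Finset.mem_insert, Finset.mem_filter, Finset.mem_univ, true_and,
          Fin.ext_iff, hi₀def]
        omega
      have hi₀notin : i₀ ∉ univ.filter (fun i : Fin N => i.val < n) := by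
        simp [hi₀def]
      rw [hfilter, Finset.sum_insert hi₀notin, Function.update_self]
      have hrest : ∑ i ∈ univ.filter (fun i : Fin N => i.val < n),
          ((Function.update B i₀ Bi0 i)).card
          = ∑ i ∈ univ.filter (fun i : Fin N => i.val < n), (B i).card := by
        refine Finset.sum_congr rfl (fun i hi => ?_)
        have : i ≠ i₀ := by
          have := (Finset.mem_filter.1 hi).2
          intro h; rw [h, hi₀def] at this; exact lt_irrefl n this
        rw [Function.update_of_ne this]
      rw [hrest]
      have hnew : α * U * Bi0.card ≤ 2 * N * S ^ 2 := by
        have : Bi0.card = bad t0 := rfl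
        rw [this, mul_assoc]
        exact le_trans (Nat.mul_le_mul_left _ hUbad) hbadsum
      calc α * U * (Bi0.card + ∑ i ∈ univ.filter (fun i : Fin N => i.val < n), (B i).card)
          = α * U * Bi0.card
            + α * U * ∑ i ∈ univ.filter (fun i : Fin N => i.val < n), (B i).card := by ring
        _ ≤ 2 * N * S ^ 2 + 2 * n * N * S ^ 2 := add_le_add hnew hsum
        _ = 2 * (n + 1) * N * S ^ 2 := by ring
end
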